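/- arXiv:0903.0614 — 4 statements merged into one kernel-verified Lean document; each statement's English description precedes it below -/
import Mathlib

section
/- Let 1 ≤ s ≤ n be integers and let A be a fixed n×n real or complex matrix with rows R₁, …, R_n. Let k₁, …, k_s be chosen independently and uniformly at random from {1, …, n}, and let B be the s×n matrix with rows R_{k₁}, …, R_{k_s}. Then E ‖ A*A − (n/s)·B*B ‖_F² ≤ (n/s) · Σ_{k=1}^n |R_k|⁴. -/
open MeasureTheory ProbabilityTheory Matrix

/-- The square of the Frobenius norm of a matrix. -/
noncomputable def frobSq {F : Type*} [RCLike F] {m n : ℕ} (M : Matrix (Fin m) (Fin n) F) : ℝ :=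
  ∑ i, ∑ j, ‖M i j‖ ^ 2

open Finset

lemma card_ne (s : ℕ) (t : Fin s) : Fintype.card {j : Fin s // j ≠ t} = s - 1 := by
  simp [Fintype.card_subtype_compl]

lemma sum_eval (s n : ℕ) (t : Fin s) (G : Fin n → ℝ) :
    ∑ k : Fin s → Fin n, G (k t) = (n:ℝ) ^ (s - 1) * ∑ a, G a := by
  rw [← Equiv.sum_comp (Equiv.funSplitAt t (Fin n)).symm (fun k : Fin s → Fin n => G (k t))]
  rw [Fintype.sum_prod_type]
  simp [Finset.sum_const, Fintype.card_fun, card_ne, mul_comm, ← Finset.sum_mul]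

lemma sum_offdiag (s n : ℕ) {t t' : Fin s} (htt : t ≠ t') (f g : Fin n → ℝ)
    (hg : ∑ a, g a = 0) :
    ∑ k : Fin s → Fin n, f (k t) * g (k t') = 0 := by
  rw [← Equiv.sum_comp (Equiv.funSplitAt t' (Fin n)).symm
    (fun k : Fin s → Fin n => f (k t) * g (k t'))]
  rw [Fintype.sum_prod_type]
  simp only [Equiv.funSplitAt_symm_apply, dif_pos rfl, dif_neg htt]
  rw [Finset.sum_comm]
  simp [← Finset.mul_sum, hg]

lemma real_key (s n : ℕ) (u : Fin n → ℝ) (hu : ∑ m, u m = 0) :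
    ∑ k : Fin s → Fin n, (∑ t : Fin s, u (k t)) ^ 2 =
      (s : ℝ) * (n:ℝ) ^ (s - 1) * ∑ m, u m ^ 2 := by
  have expand : ∀ k : Fin s → Fin n, (∑ t : Fin s, u (k t)) ^ 2 =
      ∑ t : Fin s, ∑ t' : Fin s, u (k t) * u (k t') := by
    intro k; rw [sq, Finset.sum_mul_sum]
  simp_rw [expand]
  rw [Finset.sum_comm]
  have : ∀ t : Fin s, ∑ t' : Fin s, ∑ k : Fin s → Fin n, u (k t) * u (k t')
      = (n:ℝ) ^ (s-1) * ∑ m, u m ^ 2 := by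
    intro t
    have h1 : ∀ t' : Fin s, ∑ k : Fin s → Fin n, u (k t) * u (k t')
        = if t' = t then (n:ℝ) ^ (s-1) * ∑ m, u m ^ 2 else 0 := by
      intro t'
      split_ifs with h
      · subst h
        simpa [sq] using sum_eval s n t' (fun a => u a * u a)
      · exact sum_offdiag s n (Ne.symm h) u u hu
    simp_rw [h1]
    simp
  calc ∑ t : Fin s, ∑ k : Fin s → Fin n, ∑ t' : Fin s, u (k t) * u (k t')
      = ∑ t : Fin s, ∑ t' : Fin s, ∑ k : Fin s → Fin n, u (k t) * u (k t') :=
        Finset.sum_congr rfl fun t _ => Finset.sum_comm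
    _ = ∑ _t : Fin s, (n:ℝ)^(s-1) * ∑ m, u m ^ 2 := Finset.sum_congr rfl fun t _ => this t
    _ = (s:ℝ) * ((n:ℝ)^(s-1) * ∑ m, u m ^ 2) := by simp [Finset.sum_const, nsmul_eq_mul]
    _ = _ := by ring

lemma real_var (n : ℕ) (a : ℝ) (x : Fin n → ℝ) (hx : ∑ m, x m = n * a) :
    ∑ m, (a - x m) ^ 2 ≤ ∑ m, x m ^ 2 := by
  have key : ∑ m, (a - x m) ^ 2 = ∑ m, x m ^ 2 - n * a ^ 2 := by
    simp only [sub_sq, Finset.sum_add_distrib, Finset.sum_sub_distrib, Finset.sum_const,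
      ← Finset.mul_sum, hx, nsmul_eq_mul, Finset.card_univ, Fintype.card_fin]
    ring
  rw [key]
  nlinarith [mul_nonneg (Nat.cast_nonneg (α := ℝ) n) (sq_nonneg a)]

lemma key {F : Type*} [RCLike F] (s n : ℕ) (h : Fin n → F) (hsum : ∑ m, h m = 0) :
    ∑ k : Fin s → Fin n, ‖∑ t : Fin s, h (k t)‖ ^ 2 =
      (s : ℝ) * (n : ℝ) ^ (s - 1) * ∑ m, ‖h m‖ ^ 2 := by
  have hre : ∑ m : Fin n, RCLike.re (h m) = 0 := by rw [← map_sum, hsum, map_zero]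
  have him : ∑ m : Fin n, RCLike.im (h m) = 0 := by rw [← map_sum, hsum, map_zero]
  have e : ∀ z : F, ‖z‖ ^ 2 = RCLike.re z ^ 2 + RCLike.im z ^ 2 := by
    intro z; rw [RCLike.norm_sq_eq_def]; ring
  simp_rw [e, map_sum, Finset.sum_add_distrib]
  rw [real_key s n _ hre, real_key s n _ him]; ring

lemma var_bound {F : Type*} [RCLike F] (n : ℕ) (c : F) (v : Fin n → F)
    (hv : ∑ m, v m = (n : F) * c) :
    ∑ m, ‖c - v m‖ ^ 2 ≤ ∑ m, ‖v m‖ ^ 2 := by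
  have e : ∀ z : F, ‖z‖ ^ 2 = RCLike.re z ^ 2 + RCLike.im z ^ 2 := fun z => by
    rw [RCLike.norm_sq_eq_def]; ring
  have hre : ∑ m : Fin n, RCLike.re (v m) = n * RCLike.re c := by
    rw [← map_sum, hv]; simp [RCLike.mul_re]
  have him : ∑ m : Fin n, RCLike.im (v m) = n * RCLike.im c := by
    rw [← map_sum, hv]; simp [RCLike.mul_im]
  simp_rw [e, map_sub, Finset.sum_add_distrib]
  exact add_le_add (real_var n _ _ hre) (real_var n _ _ him)

noncomputable def qq {F : Type*} [RCLike F] {n : ℕ} (A : Matrix (Fin n) (Fin n) F)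
    (m i j : Fin n) : F := (starRingEnd F) (A m i) * A m j

noncomputable def cc {F : Type*} [RCLike F] {n : ℕ} (A : Matrix (Fin n) (Fin n) F)
    (i j : Fin n) : F := ∑ m, qq A m i j

lemma hsum0 {F : Type*} [RCLike F] {n : ℕ} (A : Matrix (Fin n) (Fin n) F) (i j : Fin n) :
    ∑ m : Fin n, (cc A i j - (n : F) * qq A m i j) = 0 := by
  rw [Finset.sum_sub_distrib, ← Finset.mul_sum, Finset.sum_const, Finset.card_univ,
    Fintype.card_fin, nsmul_eq_mul]
  simp [cc]

lemma entry_eq {F : Type*} [RCLike F] {s n : ℕ} (hs : 1 ≤ s) (A : Matrix (Fin n) (Fin n) F)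
    (k : Fin s → Fin n) (i j : Fin n) :
    (Aᴴ * A - ((n : ℝ) / (s : ℝ)) •
      ((Matrix.of fun i j => A (k i) j)ᴴ * (Matrix.of fun i j => A (k i) j))) i j =
    ((s : F))⁻¹ * ∑ t : Fin s, (cc A i j - (n : F) * qq A (k t) i j) := by
  have hs0 : (s : F) ≠ 0 := Nat.cast_ne_zero.mpr (by omega)
  rw [Finset.sum_sub_distrib, ← Finset.mul_sum, Finset.sum_const, Finset.card_univ,
    Fintype.card_fin, nsmul_eq_mul]
  simp only [Matrix.sub_apply, Matrix.smul_apply, Matrix.mul_apply, Matrix.conjTranspose_apply,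
    Matrix.of_apply, RCLike.real_smul_eq_coe_mul, cc, qq]
  push_cast
  field_simp
  simp only [starRingEnd_apply]
  ring

/-- Random sampling lemma: if `B` is formed by `s` rows of `A` chosen independently and
uniformly at random (with replacement), then
`E ‖A*A − (n/s)·B*B‖_F² ≤ (n/s)·Σ_k |R_k|⁴`.  The expectation over the iid uniform indices
`k₁,…,k_s` is written as the average over all tuples `k : Fin s → Fin n`. -/
theorem random_sampling_rows {F : Type*} [RCLike F] (s n : ℕ) (hs : 1 ≤ s) (hsn : s ≤ n)
    (A : Matrix (Fin n) (Fin n) F) :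
    (1 / (n : ℝ) ^ s) * ∑ k : Fin s → Fin n,
        frobSq (Aᴴ * A - ((n : ℝ) / (s : ℝ)) •
          ((Matrix.of fun i j => A (k i) j)ᴴ * (Matrix.of fun i j => A (k i) j))) ≤
      ((n : ℝ) / (s : ℝ)) * ∑ k : Fin n, (∑ j, ‖A k j‖ ^ 2) ^ 2 := by
  have hn : 1 ≤ n := le_trans hs hsn
  have hsR : (0:ℝ) < s := by exact_mod_cast hs
  have hnR : (0:ℝ) < n := by exact_mod_cast hn
  have hpow : (n:ℝ) ^ s = (n:ℝ) ^ (s-1) * n := by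
    conv_lhs => rw [show s = (s-1)+1 by omega]
    rw [pow_succ]
  have lhs_eq : (1 / (n : ℝ) ^ s) * ∑ k : Fin s → Fin n,
        frobSq (Aᴴ * A - ((n : ℝ) / (s : ℝ)) •
          ((Matrix.of fun i j => A (k i) j)ᴴ * (Matrix.of fun i j => A (k i) j)))
      = (1/((n:ℝ)*(s:ℝ))) * ∑ i, ∑ j, ∑ m, ‖cc A i j - (n:F) * qq A m i j‖ ^ 2 := by
    have h1 : ∀ k : Fin s → Fin n,
        frobSq (Aᴴ * A - ((n : ℝ) / (s : ℝ)) •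
          ((Matrix.of fun i j => A (k i) j)ᴴ * (Matrix.of fun i j => A (k i) j)))
        = ∑ i, ∑ j, ((s:ℝ)⁻¹)^2 * ‖∑ t : Fin s, (cc A i j - (n:F) * qq A (k t) i j)‖^2 := by
      intro k
      unfold frobSq
      refine Finset.sum_congr rfl fun i _ => Finset.sum_congr rfl fun j _ => ?_
      rw [entry_eq hs A k i j, norm_mul, mul_pow, norm_inv, RCLike.norm_natCast]
    calc (1 / (n : ℝ) ^ s) * ∑ k : Fin s → Fin n,
        frobSq (Aᴴ * A - ((n : ℝ) / (s : ℝ)) •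
          ((Matrix.of fun i j => A (k i) j)ᴴ * (Matrix.of fun i j => A (k i) j)))
        = (1 / (n : ℝ) ^ s) * ∑ i, ∑ j, ((s:ℝ)⁻¹)^2 *
            ∑ k : Fin s → Fin n, ‖∑ t : Fin s, (cc A i j - (n:F) * qq A (k t) i j)‖^2 := by
          rw [Finset.sum_congr rfl fun k _ => h1 k, Finset.sum_comm]
          congr 1
          refine Finset.sum_congr rfl fun i _ => ?_
          rw [Finset.sum_comm]
          refine Finset.sum_congr rfl fun j _ => ?_
          rw [Finset.mul_sum]
      _ = (1 / (n : ℝ) ^ s) * ∑ i, ∑ j, ((s:ℝ)⁻¹)^2 *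
            ((s:ℝ) * (n:ℝ)^(s-1) * ∑ m, ‖cc A i j - (n:F) * qq A m i j‖^2) := by
          congr 1
          refine Finset.sum_congr rfl fun i _ => Finset.sum_congr rfl fun j _ => ?_
          rw [key s n _ (hsum0 A i j)]
      _ = (1/((n:ℝ)*(s:ℝ))) * ∑ i, ∑ j, ∑ m, ‖cc A i j - (n:F) * qq A m i j‖ ^ 2 := by
          simp_rw [← mul_assoc, ← Finset.mul_sum]
          rw [← mul_assoc]
          congr 1
          rw [hpow]
          field_simp
  rw [lhs_eq]
  have hb : ∑ i, ∑ j, ∑ m, ‖cc A i j - (n:F) * qq A m i j‖ ^ 2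
      ≤ (n:ℝ)^2 * ∑ m, (∑ j, ‖A m j‖^2)^2 := by
    calc ∑ i, ∑ j, ∑ m, ‖cc A i j - (n:F) * qq A m i j‖ ^ 2
        ≤ ∑ i, ∑ j, ∑ m : Fin n, ‖(n:F) * qq A m i j‖^2 := by
          refine Finset.sum_le_sum fun i _ => Finset.sum_le_sum fun j _ => ?_
          refine var_bound n _ _ ?_
          rw [← Finset.mul_sum]
          rfl
      _ = (n:ℝ)^2 * ∑ m, (∑ j, ‖A m j‖^2)^2 := by
          have e1 : ∀ (m i j : Fin n), ‖(n:F) * qq A m i j‖^2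
              = (n:ℝ)^2 * (‖A m i‖^2 * ‖A m j‖^2) := by
            intro m i j
            simp [qq, norm_mul, mul_pow, RCLike.norm_natCast, mul_assoc]
          simp_rw [e1, ← Finset.mul_sum]
          congr 1
          calc ∑ i : Fin n, ∑ j : Fin n, ∑ m : Fin n, ‖A m i‖^2 * ‖A m j‖^2
              = ∑ i : Fin n, ∑ m : Fin n, ∑ j : Fin n, ‖A m i‖^2 * ‖A m j‖^2 :=
                Finset.sum_congr rfl fun _ _ => Finset.sum_comm
            _ = ∑ m : Fin n, ∑ i : Fin n, ∑ j : Fin n, ‖A m i‖^2 * ‖A m j‖^2 :=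
                Finset.sum_comm
            _ = ∑ m : Fin n, (∑ j : Fin n, ‖A m j‖^2)^2 := by
                refine Finset.sum_congr rfl fun m _ => ?_
                rw [← Finset.sum_mul_sum, sq]
  calc (1/((n:ℝ)*(s:ℝ))) * ∑ i, ∑ j, ∑ m, ‖cc A i j - (n:F) * qq A m i j‖ ^ 2
      ≤ (1/((n:ℝ)*(s:ℝ))) * ((n:ℝ)^2 * ∑ m, (∑ j, ‖A m j‖^2)^2) := by
        apply mul_le_mul_of_nonneg_left hb
        positivity
    _ = ((n : ℝ) / (s : ℝ)) * ∑ k : Fin n, (∑ j, ‖A k j‖ ^ 2) ^ 2 := by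
        field_simp
end

section
/- There is an absolute constant C > 0 such that the following holds. Let s, n be integers with 1 ≤ s ≤ √n, let A be a row-exchangeable random n×n real or complex matrix with rows R₁, …, R_n, and let B be the s×n matrix formed by the first s rows R₁, …, R_s of A. Then E Σ_{i=1}^n ( σᵢ(A)² − (n/s)·σᵢ(B)² )² ≤ C · (n²/s) · E ( max_{1≤k≤n} |R_k| )⁴, where we set σᵢ(B) := 0 for i > s. -/
open MeasureTheory ProbabilityTheory Matrix
open scoped ComplexOrder

/-- The `i+1`-st largest singular value of the matrix `B`: the singular values
(square roots of the eigenvalues of `Bᴴ * B`) listed in decreasing order.  For an `s × n`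
matrix with `s ≤ n` this lists `σ₁ ≥ … ≥ σ_s` padded with `n - s` zeros. -/
noncomputable def sVal {F : Type*} [RCLike F] {m n : ℕ} (B : Matrix (Fin m) (Fin n) F)
    (i : Fin n) : ℝ :=
  Real.sqrt ((Matrix.isHermitian_conjTranspose_mul_self B).eigenvalues
    (Tuple.sort (Matrix.isHermitian_conjTranspose_mul_self B).eigenvalues i.rev))


section Det
variable {F : Type*} [RCLike F] {n : ℕ}

noncomputable def mu {X : Matrix (Fin n) (Fin n) F} (hX : X.IsHermitian) (i : Fin n) : ℝ :=
  hX.eigenvalues (Tuple.sort hX.eigenvalues i.rev)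

lemma mu_antitone {X : Matrix (Fin n) (Fin n) F} (hX : X.IsHermitian) : Antitone (mu hX) :=
  fun _ _ hij => Tuple.monotone_sort hX.eigenvalues (Fin.rev_le_rev.2 hij)

lemma sum_mu {X : Matrix (Fin n) (Fin n) F} (hX : X.IsHermitian) (g : ℝ → ℝ) :
    ∑ i, g (mu hX i) = ∑ i, g (hX.eigenvalues i) :=
  Equiv.sum_comp (Fin.revPerm.trans (Tuple.sort hX.eigenvalues)) (fun j => g (hX.eigenvalues j))

lemma re_trace_mul_eq {X Y : Matrix (Fin n) (Fin n) F} (hX : X.IsHermitian) (hY : Y.IsHermitian) :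
    RCLike.re ((X * Y).trace) =
      ∑ i, ∑ j, hX.eigenvalues i * hY.eigenvalues j *
        ‖((star (hX.eigenvectorUnitary : Matrix (Fin n) (Fin n) F)) *
          (hY.eigenvectorUnitary : Matrix (Fin n) (Fin n) F)) i j‖ ^ 2 := by
  conv_lhs => rw [hX.spectral_theorem, hY.spectral_theorem, Unitary.conjStarAlgAut_apply,
    Unitary.conjStarAlgAut_apply]
  set U := (hX.eigenvectorUnitary : Matrix (Fin n) (Fin n) F) with hU
  set V := (hY.eigenvectorUnitary : Matrix (Fin n) (Fin n) F) with hVdef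
  set W := star U * V with hW
  set d := hX.eigenvalues
  set e := hY.eigenvalues
  have assoc1 : (U * diagonal (RCLike.ofReal ∘ d) * star U) *
      (V * diagonal (RCLike.ofReal ∘ e) * star V) =
      U * (diagonal (RCLike.ofReal ∘ d) * star U * V * diagonal (RCLike.ofReal ∘ e) * star V) := by
    simp only [mul_assoc]
  rw [assoc1, Matrix.trace_mul_comm]
  have assoc2 : (diagonal (RCLike.ofReal ∘ d) * star U * V * diagonal (RCLike.ofReal ∘ e) * star V)
      * U = diagonal (RCLike.ofReal ∘ d) * W * diagonal (RCLike.ofReal ∘ e) * star W := by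
    rw [hW, StarMul.star_mul, star_star]
    simp only [mul_assoc]
  rw [assoc2, Matrix.trace]
  have entry : ∀ i, (diagonal (RCLike.ofReal ∘ d) * W * diagonal (RCLike.ofReal ∘ e) * star W).diag i
      = ∑ j, ((d i * e j * ‖W i j‖ ^ 2 : ℝ) : F) := by
    intro i
    simp only [Matrix.diag_apply]
    rw [Matrix.mul_apply]
    simp only [Matrix.mul_diagonal, Matrix.diagonal_mul, Matrix.star_apply, Function.comp_apply]
    congr 1
    ext j
    have h2 : (↑(d i) * W i j * ↑(e j)) * star (W i j)
        = ((d i * e j : ℝ) : F) * (W i j * (starRingEnd F) (W i j)) := by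
      rw [RCLike.star_def]
      push_cast
      ring
    rw [h2, RCLike.mul_conj]
    push_cast
    ring
  simp only [entry]
  rw [map_sum]
  congr 1
  ext i
  rw [map_sum]
  congr 1
  ext j
  rw [RCLike.ofReal_re]

lemma normsq_mem_doublyStochastic {W : Matrix (Fin n) (Fin n) F}
    (h1 : star W * W = 1) (h2 : W * star W = 1) :
    (Matrix.of fun i j => ‖W i j‖ ^ 2) ∈ doublyStochastic ℝ (Fin n) := by
  rw [mem_doublyStochastic_iff_sum]
  refine ⟨fun i j => by simp only [Matrix.of_apply]; positivity, fun i => ?_, fun j => ?_⟩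
  · have := congrArg (fun M => RCLike.re (M i i)) h2
    simp only [Matrix.mul_apply, Matrix.star_apply, Matrix.one_apply_eq] at this
    rw [map_sum] at this
    simp only [RCLike.star_def, RCLike.mul_conj, ← RCLike.ofReal_pow, RCLike.ofReal_re] at this
    simpa using this
  · have := congrArg (fun M => RCLike.re (M j j)) h1
    simp only [Matrix.mul_apply, Matrix.star_apply, Matrix.one_apply_eq] at this
    rw [map_sum] at this
    simp only [RCLike.star_def, RCLike.conj_mul, ← RCLike.ofReal_pow, RCLike.ofReal_re] at this
    simpa using this

lemma perm_sum_le {X Y : Matrix (Fin n) (Fin n) F} (hX : X.IsHermitian) (hY : Y.IsHermitian)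
    (σ : Equiv.Perm (Fin n)) :
    ∑ i, hX.eigenvalues i * hY.eigenvalues (σ i) ≤ ∑ i, mu hX i * mu hY i := by
  set eX : Equiv.Perm (Fin n) := Fin.revPerm.trans (Tuple.sort hX.eigenvalues) with heX
  set eY : Equiv.Perm (Fin n) := Fin.revPerm.trans (Tuple.sort hY.eigenvalues) with heY
  have h1 : ∑ i, hX.eigenvalues i * hY.eigenvalues (σ i)
      = ∑ i, mu hX i * mu hY ((eX.trans (σ.trans eY.symm)) i) := by
    rw [← Equiv.sum_comp eX (fun i => hX.eigenvalues i * hY.eigenvalues (σ i))]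
    refine Finset.sum_congr rfl fun i _ => ?_
    simp only [Equiv.trans_apply, mu, heX, heY]
    simp [Fin.revPerm]
  rw [h1]
  exact (Antitone.monovary (mu_antitone hX) (mu_antitone hY)).sum_mul_comp_perm_le_sum_mul

lemma re_trace_mul_le {X Y : Matrix (Fin n) (Fin n) F} (hX : X.IsHermitian) (hY : Y.IsHermitian) :
    RCLike.re ((X * Y).trace) ≤ ∑ i, mu hX i * mu hY i := by
  rw [re_trace_mul_eq hX hY]
  set W := (star (hX.eigenvectorUnitary : Matrix (Fin n) (Fin n) F)) *
          (hY.eigenvectorUnitary : Matrix (Fin n) (Fin n) F) with hW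
  have hWu : W ∈ Matrix.unitaryGroup (Fin n) F :=
    mul_mem (Unitary.star_mem hX.eigenvectorUnitary.2) hY.eigenvectorUnitary.2
  obtain ⟨w, hw0, hw1, hwsum⟩ := exists_eq_sum_perm_of_mem_doublyStochastic
    (normsq_mem_doublyStochastic (n := n) (F := F) hWu.1 hWu.2)
  have hS : ∀ i j, ‖W i j‖ ^ 2 = ∑ σ : Equiv.Perm (Fin n), w σ * (σ.permMatrix ℝ) i j := by
    intro i j
    have := congrArg (fun M => M i j) hwsum
    simp only [Matrix.sum_apply, Matrix.smul_apply, smul_eq_mul, Matrix.of_apply] at this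
    exact this.symm
  have key : ∀ i, ∑ j, hX.eigenvalues i * hY.eigenvalues j * ‖W i j‖ ^ 2
      = ∑ σ : Equiv.Perm (Fin n), w σ * (hX.eigenvalues i * hY.eigenvalues (σ i)) := by
    intro i
    simp only [hS, Finset.mul_sum]
    rw [Finset.sum_comm]
    refine Finset.sum_congr rfl fun σ _ => ?_
    rw [Finset.sum_eq_single (σ i)]
    · simp only [Equiv.Perm.permMatrix, PEquiv.toMatrix_apply, Equiv.toPEquiv_apply,
        Option.mem_def, Option.some.injEq]
      simp
      ring
    · intro b _ hb
      simp only [Equiv.Perm.permMatrix, PEquiv.toMatrix_apply, Equiv.toPEquiv_apply,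
        Option.mem_def, Option.some.injEq, if_neg (Ne.symm hb)]
      ring
    · intro h
      exact absurd (Finset.mem_univ _) h
  calc ∑ i, ∑ j, hX.eigenvalues i * hY.eigenvalues j * ‖W i j‖ ^ 2
      = ∑ i, ∑ σ : Equiv.Perm (Fin n), w σ * (hX.eigenvalues i * hY.eigenvalues (σ i)) :=
        Finset.sum_congr rfl fun i _ => key i
    _ = ∑ σ : Equiv.Perm (Fin n), w σ * ∑ i, hX.eigenvalues i * hY.eigenvalues (σ i) := by
        rw [Finset.sum_comm]
        simp [Finset.mul_sum]
    _ ≤ ∑ σ : Equiv.Perm (Fin n), w σ * ∑ i, mu hX i * mu hY i := by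
        refine Finset.sum_le_sum fun σ _ => mul_le_mul_of_nonneg_left (perm_sum_le hX hY σ) (hw0 σ)
    _ = ∑ i, mu hX i * mu hY i := by rw [← Finset.sum_mul, hw1, one_mul]

lemma re_trace_sq {X : Matrix (Fin n) (Fin n) F} (hX : X.IsHermitian) :
    RCLike.re ((X * X).trace) = ∑ i, mu hX i ^ 2 := by
  rw [re_trace_mul_eq hX hX, sum_mu hX (fun x => x ^ 2)]
  have h1 : (star (hX.eigenvectorUnitary : Matrix (Fin n) (Fin n) F)) *
      (hX.eigenvectorUnitary : Matrix (Fin n) (Fin n) F) = 1 :=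
    Matrix.UnitaryGroup.star_mul_self _
  rw [h1]
  have hone : ∀ i j : Fin n, ‖(1 : Matrix (Fin n) (Fin n) F) i j‖ ^ 2
      = if i = j then 1 else 0 := by
    intro i j
    by_cases h : i = j <;> simp [Matrix.one_apply, h]
  simp only [hone, mul_ite, mul_one, mul_zero, Finset.sum_ite_eq, Finset.mem_univ, if_true]
  exact Finset.sum_congr rfl fun i _ => (sq (hX.eigenvalues i)).symm

lemma hw_ineq {X Y : Matrix (Fin n) (Fin n) F} (hX : X.IsHermitian) (hY : Y.IsHermitian)
    {t : ℝ} (ht : 0 ≤ t) :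
    ∑ i, (mu hX i - t * mu hY i) ^ 2 ≤
      RCLike.re ((X * X).trace) - 2 * t * RCLike.re ((X * Y).trace)
        + t ^ 2 * RCLike.re ((Y * Y).trace) := by
  have expand : ∑ i, (mu hX i - t * mu hY i) ^ 2
      = ∑ i, mu hX i ^ 2 - 2 * t * ∑ i, mu hX i * mu hY i + t ^ 2 * ∑ i, mu hY i ^ 2 := by
    rw [Finset.mul_sum, Finset.mul_sum, ← Finset.sum_sub_distrib, ← Finset.sum_add_distrib]
    refine Finset.sum_congr rfl fun i _ => by ring
  rw [expand, re_trace_sq hX, re_trace_sq hY]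
  have := re_trace_mul_le hX hY
  nlinarith [this, ht]

lemma re_trace_conj_prod {m₁ m₂ : ℕ} (A1 : Matrix (Fin m₁) (Fin n) F)
    (A2 : Matrix (Fin m₂) (Fin n) F) :
    RCLike.re (((A1ᴴ * A1) * (A2ᴴ * A2)).trace) =
      ∑ k, ∑ l, ‖∑ p, A1 k p * (starRingEnd F) (A2 l p)‖ ^ 2 := by
  have h1 : (A1ᴴ * A1) * (A2ᴴ * A2) = (A1ᴴ * (A1 * A2ᴴ)) * A2 := by
    simp only [Matrix.mul_assoc]
  rw [h1, Matrix.trace_mul_comm]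
  have h2 : A2 * (A1ᴴ * (A1 * A2ᴴ)) = (A1 * A2ᴴ)ᴴ * (A1 * A2ᴴ) := by
    rw [Matrix.conjTranspose_mul, Matrix.conjTranspose_conjTranspose]
    simp only [Matrix.mul_assoc]
  rw [h2, Matrix.trace]
  rw [map_sum]
  rw [Finset.sum_comm]
  refine Finset.sum_congr rfl fun k _ => ?_
  simp only [Matrix.diag_apply, Matrix.mul_apply, Matrix.conjTranspose_apply, RCLike.star_def]
  rw [map_sum]
  refine Finset.sum_congr rfl fun x _ => ?_
  rw [RCLike.conj_mul, ← RCLike.ofReal_pow, RCLike.ofReal_re]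

lemma sVal_sq {m : ℕ} (B : Matrix (Fin m) (Fin n) F) (i : Fin n) :
    sVal B i ^ 2 = mu (Matrix.isHermitian_conjTranspose_mul_self B) i :=
  Real.sq_sqrt ((Matrix.posSemidef_conjTranspose_mul_self B).eigenvalues_nonneg _)

lemma pointwise_ineq {s : ℕ} (hsn' : s ≤ n) (A : Matrix (Fin n) (Fin n) F) {t : ℝ} (ht : 0 ≤ t) :
    ∑ i, (sVal A i ^ 2 - t * sVal (Matrix.of fun (a : Fin s) (b : Fin n) =>
        A (Fin.castLE hsn' a) b) i ^ 2) ^ 2 ≤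
      (∑ k, ∑ l, ‖∑ p, A k p * (starRingEnd F) (A l p)‖ ^ 2)
        - 2 * t * (∑ k : Fin n, ∑ l : Fin s,
            ‖∑ p, A k p * (starRingEnd F) (A (Fin.castLE hsn' l) p)‖ ^ 2)
        + t ^ 2 * (∑ k : Fin s, ∑ l : Fin s,
            ‖∑ p, A (Fin.castLE hsn' k) p * (starRingEnd F) (A (Fin.castLE hsn' l) p)‖ ^ 2) := by
  set B := (Matrix.of fun (a : Fin s) (b : Fin n) => A (Fin.castLE hsn' a) b) with hB
  have key := hw_ineq (Matrix.isHermitian_conjTranspose_mul_self A)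
    (Matrix.isHermitian_conjTranspose_mul_self B) ht
  simp only [sVal_sq]
  refine le_trans key ?_
  rw [re_trace_conj_prod A A, re_trace_conj_prod A B, re_trace_conj_prod B B]
  simp only [hB, Matrix.of_apply]
  exact le_rfl

end Det

def Gf {F : Type*} [RCLike F] {n : ℕ} (k l : Fin n) (M : Fin n → Fin n → F) : ℝ :=
  ‖∑ p, M k p * (starRingEnd F) (M l p)‖ ^ 2

lemma Gf_comp {F : Type*} [RCLike F] {n : ℕ} (k l : Fin n) (σ : Equiv.Perm (Fin n))
    (M : Fin n → Fin n → F) : Gf k l (fun i => M (σ i)) = Gf (σ k) (σ l) M := rfl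

lemma Gf_nonneg {F : Type*} [RCLike F] {n : ℕ} (k l : Fin n) (M : Fin n → Fin n → F) :
    0 ≤ Gf k l M := by unfold Gf; positivity

lemma Gf_measurable {F : Type*} [RCLike F] [MeasurableSpace F] [BorelSpace F] {n : ℕ}
    (k l : Fin n) : Measurable (Gf (F := F) k l) := by
  apply Measurable.pow_const
  apply Measurable.norm
  apply Finset.measurable_sum
  intro p _
  have h1 : Measurable fun M : Fin n → Fin n → F => M k p :=
    (measurable_pi_apply p).comp (measurable_pi_apply k)
  have h2 : Measurable fun M : Fin n → Fin n → F => (starRingEnd F) (M l p) :=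
    (RCLike.continuous_conj (K := F)).measurable.comp ((measurable_pi_apply p).comp (measurable_pi_apply l))
  exact h1.mul h2

lemma Gf_le {F : Type*} [RCLike F] {n : ℕ} (hn : 0 < n) (k l : Fin n)
    (M : Fin n → Fin n → F) :
    Gf k l M ≤ (⨆ k : Fin n, Real.sqrt (∑ j, ‖M k j‖ ^ 2)) ^ 4 := by
  haveI : Nonempty (Fin n) := ⟨⟨0, hn⟩⟩
  set S : Fin n → ℝ := fun k => Real.sqrt (∑ j, ‖M k j‖ ^ 2) with hS
  have hS0 : ∀ k, 0 ≤ S k := fun k => Real.sqrt_nonneg _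
  have hSsq : ∀ m, S m ^ 2 = ∑ j, ‖M m j‖ ^ 2 := fun m => Real.sq_sqrt (by positivity)
  have hsup : ∀ m, S m ≤ ⨆ k, S k := fun m =>
    le_ciSup (Set.Finite.bddAbove (Set.finite_range S)) m
  calc Gf k l M = ‖∑ p, M k p * (starRingEnd F) (M l p)‖ ^ 2 := rfl
    _ ≤ (∑ p, ‖M k p‖ * ‖M l p‖) ^ 2 := by
        apply pow_le_pow_left₀ (norm_nonneg _)
        refine le_trans (norm_sum_le _ _) ?_
        refine le_of_eq (Finset.sum_congr rfl fun p _ => ?_)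
        rw [norm_mul, RCLike.norm_conj]
    _ ≤ (∑ p, ‖M k p‖ ^ 2) * (∑ p, ‖M l p‖ ^ 2) := Finset.sum_mul_sq_le_sq_mul_sq _ _ _
    _ = S k ^ 2 * S l ^ 2 := by rw [hSsq, hSsq]
    _ ≤ (⨆ k, S k) ^ 2 * (⨆ k, S k) ^ 2 := by
        exact mul_le_mul (pow_le_pow_left₀ (hS0 k) (hsup k) 2)
          (pow_le_pow_left₀ (hS0 l) (hsup l) 2) (sq_nonneg _)
          (pow_nonneg (le_trans (hS0 k) (hsup k)) 2)
    _ = (⨆ k, S k) ^ 4 := by ring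


set_option maxHeartbeats 2000000 in
/-- Sampling of row-exchangeable matrices: for `1 ≤ s ≤ √n` (for integers, `s ≤ √n` is
equivalent to `s * s ≤ n`) and a row-exchangeable random `n × n` matrix `A` with rows
`R₁, …, R_n`, letting `B` be the `s × n` matrix of the first `s` rows,
`E Σᵢ (σᵢ(A)² − (n/s) σᵢ(B)²)² ≤ C (n²/s) E (max_k |R_k|)⁴`, where `σᵢ(B) := 0` for
`i > s`. -/
theorem sampling_row_exchangeable :
    ∃ C : ℝ, 0 < C ∧
      ∀ (F : Type) (_ : RCLike F) (_ : MeasurableSpace F) (_ : BorelSpace F)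
        (s n : ℕ) (hs : 1 ≤ s) (hsn : s * s ≤ n)
        (Ω : Type) (_ : MeasurableSpace Ω) (P : Measure Ω) (_ : IsProbabilityMeasure P)
        (A : Ω → Fin n → Fin n → F),
        Measurable A →
        (∀ σperm : Equiv.Perm (Fin n),
          Measure.map (fun ω i => A ω (σperm i)) P = Measure.map A P) →
        ∫⁻ ω, ENNReal.ofReal (∑ i : Fin n,
            (sVal (Matrix.of (A ω)) i ^ 2 - ((n : ℝ) / (s : ℝ)) *
              sVal (Matrix.of fun (a : Fin s) (b : Fin n) =>
                A ω (Fin.castLE (by nlinarith) a) b) i ^ 2) ^ 2) ∂P ≤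
          ENNReal.ofReal (C * (n : ℝ) ^ 2 / (s : ℝ)) *
            ∫⁻ ω, ENNReal.ofReal ((⨆ k : Fin n, Real.sqrt (∑ j, ‖A ω k j‖ ^ 2)) ^ 4) ∂P := by
  refine ⟨1, one_pos, ?_⟩
  intro F _ _ _ s n hs hsn Ω _ P _ A hA hexch
  have hs0 : 0 < s := hs
  have hn0 : 0 < n := by nlinarith
  have hsn' : s ≤ n := by nlinarith
  haveI : Nonempty (Fin n) := ⟨⟨0, hn0⟩⟩
  have hsR : (0 : ℝ) < (s : ℝ) := by exact_mod_cast hs0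
  have hnR : (0 : ℝ) < (n : ℝ) := by exact_mod_cast hn0
  have hsnR : (s : ℝ) ≤ (n : ℝ) := by exact_mod_cast hsn'
  set t : ℝ := (n : ℝ) / (s : ℝ) with ht_def
  have ht : 0 ≤ t := by positivity
  set K : ℝ := (n : ℝ) ^ 2 / (s : ℝ) with hK_def
  have hK0 : 0 ≤ K := by positivity
  have hKn : (n : ℝ) ≤ K := by
    rw [hK_def, le_div_iff₀ hsR]; nlinarith
  -- the sup-of-row-norms function
  set m4 : Ω → ℝ := fun ω => (⨆ k : Fin n, Real.sqrt (∑ j, ‖A ω k j‖ ^ 2)) ^ 4 with hm4_def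
  have hm4nonneg : ∀ ω, 0 ≤ m4 ω := by
    intro ω
    have : (0:ℝ) ≤ ⨆ k : Fin n, Real.sqrt (∑ j, ‖A ω k j‖ ^ 2) :=
      le_ciSup_of_le (Set.Finite.bddAbove (Set.finite_range _)) ⟨0, hn0⟩ (Real.sqrt_nonneg _)
    positivity
  have hm4m : Measurable m4 := by
    have hsup : Measurable (Finset.univ.sup' Finset.univ_nonempty
        (fun (k : Fin n) (ω : Ω) => Real.sqrt (∑ j, ‖A ω k j‖ ^ 2))) :=
      Finset.measurable_sup' Finset.univ_nonempty fun k _ =>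
        (Real.continuous_sqrt).measurable.comp (Finset.measurable_sum _ fun j _ =>
          (((measurable_pi_apply j).comp ((measurable_pi_apply k).comp hA)).norm).pow_const 2)
    have heq : m4 = fun ω => (Finset.univ.sup' Finset.univ_nonempty
        (fun (k : Fin n) (ω : Ω) => Real.sqrt (∑ j, ‖A ω k j‖ ^ 2)) ω) ^ 4 := by
      funext ω
      rw [hm4_def, Finset.sup'_apply, Finset.sup'_univ_eq_ciSup]
    rw [heq]
    exact hsup.pow_const 4
  -- main case split on finiteness of the right-hand side
  by_cases hT : ∫⁻ ω, ENNReal.ofReal ((⨆ k : Fin n, Real.sqrt (∑ j, ‖A ω k j‖ ^ 2)) ^ 4) ∂P = ⊤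
  · rw [hT, ENNReal.mul_top]
    · exact le_top
    · refine (ENNReal.ofReal_pos.mpr ?_).ne'
      positivity
  -- integrability
  have hm4i : Integrable m4 P := by
    refine ⟨hm4m.aestronglyMeasurable, ?_⟩
    rw [hasFiniteIntegral_iff_ofReal (Filter.Eventually.of_forall hm4nonneg)]
    exact lt_top_iff_ne_top.mpr hT
  have hgm : ∀ k l : Fin n, Measurable fun ω => Gf k l (A ω) :=
    fun k l => (Gf_measurable k l).comp hA
  have hgle : ∀ (ω : Ω) (k l : Fin n), Gf k l (A ω) ≤ m4 ω := fun ω k l => Gf_le hn0 k l (A ω)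
  have hgi : ∀ k l : Fin n, Integrable (fun ω => Gf k l (A ω)) P := by
    intro k l
    refine Integrable.mono' hm4i (hgm k l).aestronglyMeasurable ?_
    exact Filter.Eventually.of_forall fun ω => by
      rw [Real.norm_of_nonneg (Gf_nonneg k l (A ω))]; exact hgle ω k l
  set I : Fin n → Fin n → ℝ := fun k l => ∫ ω, Gf k l (A ω) ∂P with hI_def
  have hperm : ∀ (σ : Equiv.Perm (Fin n)) (k l : Fin n), I (σ k) (σ l) = I k l := by
    intro σ k l
    have hAσ : Measurable (fun ω (i : Fin n) => A ω (σ i)) :=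
      measurable_pi_lambda _ fun i => (measurable_pi_apply (σ i)).comp hA
    calc ∫ ω, Gf (σ k) (σ l) (A ω) ∂P
        = ∫ ω, Gf k l (fun i => A ω (σ i)) ∂P := rfl
      _ = ∫ M, Gf k l M ∂(Measure.map (fun ω i => A ω (σ i)) P) :=
          (integral_map hAσ.aemeasurable (Gf_measurable k l).aestronglyMeasurable).symm
      _ = ∫ M, Gf k l M ∂(Measure.map A P) := by rw [hexch σ]
      _ = ∫ ω, Gf k l (A ω) ∂P := integral_map hA.aemeasurable
          (Gf_measurable k l).aestronglyMeasurable
  set k0 : Fin n := ⟨0, hn0⟩ with hk0_def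
  set a : ℝ := I k0 k0 with ha_def
  have hdiag : ∀ k, I k k = a := by
    intro k
    have := hperm (Equiv.swap k0 k) k0 k0
    rwa [Equiv.swap_apply_left] at this
  have hoff : ∀ k l k' l' : Fin n, k ≠ l → k' ≠ l' → I k l = I k' l' := by
    intro k l k' l' hkl hkl'
    set σ1 := Equiv.swap k k' with hσ1
    set σ2 := Equiv.swap (σ1 l) l' with hσ2
    have h1 : σ2 (σ1 k) = k' := by
      have hσ1k : σ1 k = k' := Equiv.swap_apply_left k k'
      have hne1 : k' ≠ σ1 l := fun h => hkl (σ1.injective (hσ1k.trans h))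
      rw [hσ1k]
      exact Equiv.swap_apply_of_ne_of_ne hne1 hkl'
    have h2 : σ2 (σ1 l) = l' := Equiv.swap_apply_left _ _
    have h3 := hperm (σ1.trans σ2) k l
    simp only [Equiv.trans_apply] at h3
    rw [h1, h2] at h3
    exact h3.symm
  -- the off-diagonal common value
  have hb : ∃ b : ℝ, 0 ≤ b ∧ ∀ k l : Fin n, k ≠ l → I k l = b := by
    by_cases hn1 : 1 < n
    · refine ⟨I ⟨0, hn0⟩ ⟨1, hn1⟩, integral_nonneg fun ω => Gf_nonneg _ _ _, fun k l hkl => ?_⟩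
      exact hoff k l _ _ hkl (by simp [Fin.ext_iff])
    · refine ⟨0, le_refl _, fun k l hkl => absurd ?_ hkl⟩
      have hk := k.isLt
      have hl := l.isLt
      exact Fin.ext (by omega)
  obtain ⟨b, hb0, hoffb⟩ := hb
  have ha0 : 0 ≤ a := integral_nonneg fun ω => Gf_nonneg _ _ _
  have ham4 : a ≤ ∫ ω, m4 ω ∂P := integral_mono (hgi k0 k0) hm4i fun ω => hgle ω k0 k0
  have hm40 : 0 ≤ ∫ ω, m4 ω ∂P := le_trans ha0 ham4
  -- column sums
  have hcol : ∀ c : Fin n, ∑ k : Fin n, I k c = a + ((n : ℝ) - 1) * b := by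
    intro c
    rw [← Finset.add_sum_erase _ _ (Finset.mem_univ c), hdiag c]
    congr 1
    rw [Finset.sum_congr rfl (fun k hk => hoffb k c (Finset.ne_of_mem_erase hk)),
      Finset.sum_const, Finset.card_erase_of_mem (Finset.mem_univ c), Finset.card_univ,
      Fintype.card_fin, nsmul_eq_mul, Nat.cast_sub hn0, Nat.cast_one]
  have hrow : ∀ c : Fin n, ∑ l : Fin n, I c l = a + ((n : ℝ) - 1) * b := by
    intro c
    rw [← Finset.add_sum_erase _ _ (Finset.mem_univ c), hdiag c]
    congr 1
    rw [Finset.sum_congr rfl (fun l hl => hoffb c l (Ne.symm (Finset.ne_of_mem_erase hl))),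
      Finset.sum_const, Finset.card_erase_of_mem (Finset.mem_univ c), Finset.card_univ,
      Fintype.card_fin, nsmul_eq_mul, Nat.cast_sub hn0, Nat.cast_one]
  have hrow_s : ∀ k : Fin s, ∑ l : Fin s, I (Fin.castLE hsn' k) (Fin.castLE hsn' l)
      = a + ((s : ℝ) - 1) * b := by
    intro k
    rw [← Finset.add_sum_erase _ _ (Finset.mem_univ k), hdiag _]
    congr 1
    rw [Finset.sum_congr rfl (fun l hl => hoffb _ _
        (fun h => (Finset.ne_of_mem_erase hl) (Fin.castLE_injective hsn' h.symm))),
      Finset.sum_const, Finset.card_erase_of_mem (Finset.mem_univ k), Finset.card_univ,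
      Fintype.card_fin, nsmul_eq_mul, Nat.cast_sub hs0, Nat.cast_one]
  -- the three integral sums
  have hS1 : ∫ ω, (∑ k : Fin n, ∑ l : Fin n, Gf k l (A ω)) ∂P
      = (n : ℝ) * (a + ((n : ℝ) - 1) * b) := by
    rw [integral_finset_sum _ (fun k _ => integrable_finset_sum _ fun l _ => hgi k l)]
    rw [Finset.sum_congr rfl fun k _ => integral_finset_sum _ fun l _ => hgi k l]
    rw [Finset.sum_congr rfl fun k _ => hrow k, Finset.sum_const, Finset.card_univ,
      Fintype.card_fin, nsmul_eq_mul]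
  have hS2 : ∫ ω, (∑ k : Fin n, ∑ l : Fin s, Gf k (Fin.castLE hsn' l) (A ω)) ∂P
      = (s : ℝ) * (a + ((n : ℝ) - 1) * b) := by
    rw [integral_finset_sum _ (fun k _ => integrable_finset_sum _ fun l _ => hgi k _)]
    rw [Finset.sum_congr rfl fun k _ => integral_finset_sum _ fun l _ => hgi k _]
    rw [Finset.sum_comm]
    rw [Finset.sum_congr rfl fun l _ => hcol (Fin.castLE hsn' l), Finset.sum_const,
      Finset.card_univ, Fintype.card_fin, nsmul_eq_mul]
  have hS3 : ∫ ω, (∑ k : Fin s, ∑ l : Fin s, Gf (Fin.castLE hsn' k) (Fin.castLE hsn' l) (A ω)) ∂P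
      = (s : ℝ) * (a + ((s : ℝ) - 1) * b) := by
    rw [integral_finset_sum _ (fun k _ => integrable_finset_sum _ fun l _ => hgi _ _)]
    rw [Finset.sum_congr rfl fun k _ => integral_finset_sum _ fun l _ => hgi _ _]
    rw [Finset.sum_congr rfl fun k _ => hrow_s k, Finset.sum_const, Finset.card_univ,
      Fintype.card_fin, nsmul_eq_mul]
  -- the dominating function
  set h : Ω → ℝ := fun ω =>
      (∑ k : Fin n, ∑ l : Fin n, Gf k l (A ω))
        - 2 * t * (∑ k : Fin n, ∑ l : Fin s, Gf k (Fin.castLE hsn' l) (A ω))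
        + t ^ 2 * (∑ k : Fin s, ∑ l : Fin s, Gf (Fin.castLE hsn' k) (Fin.castLE hsn' l) (A ω))
    with hh_def
  have hint1 : Integrable (fun ω => ∑ k : Fin n, ∑ l : Fin n, Gf k l (A ω)) P :=
    integrable_finset_sum _ fun k _ => integrable_finset_sum _ fun l _ => hgi k l
  have hint2 : Integrable (fun ω => ∑ k : Fin n, ∑ l : Fin s, Gf k (Fin.castLE hsn' l) (A ω)) P :=
    integrable_finset_sum _ fun k _ => integrable_finset_sum _ fun l _ => hgi k _
  have hint3 : Integrable (fun ω => ∑ k : Fin s, ∑ l : Fin s,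
      Gf (Fin.castLE hsn' k) (Fin.castLE hsn' l) (A ω)) P :=
    integrable_finset_sum _ fun k _ => integrable_finset_sum _ fun l _ => hgi _ _
  have hhi : Integrable h P := (hint1.sub (hint2.const_mul (2 * t))).add (hint3.const_mul (t ^ 2))
  -- pointwise bound
  have hpoint : ∀ ω, (∑ i : Fin n,
      (sVal (Matrix.of (A ω)) i ^ 2 - ((n : ℝ) / (s : ℝ)) *
        sVal (Matrix.of fun (a : Fin s) (b : Fin n) =>
          A ω (Fin.castLE (by nlinarith) a) b) i ^ 2) ^ 2) ≤ h ω := by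
    intro ω
    exact pointwise_ineq hsn' (Matrix.of (A ω)) ht
  have hpos : ∀ ω, 0 ≤ h ω := fun ω =>
    le_trans (Finset.sum_nonneg fun i _ => sq_nonneg _) (hpoint ω)
  -- integral of h
  have hinth : ∫ ω, h ω ∂P = (a - b) * (K - (n : ℝ)) := by
    have key : ∫ ω, h ω ∂P =
        (∫ ω, (∑ k : Fin n, ∑ l : Fin n, Gf k l (A ω)) ∂P)
          - (2 * t) * (∫ ω, (∑ k : Fin n, ∑ l : Fin s, Gf k (Fin.castLE hsn' l) (A ω)) ∂P)
          + (t ^ 2) * (∫ ω, (∑ k : Fin s, ∑ l : Fin s,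
              Gf (Fin.castLE hsn' k) (Fin.castLE hsn' l) (A ω)) ∂P) := by
      rw [show ∫ ω, h ω ∂P = ∫ ω, ((∑ k : Fin n, ∑ l : Fin n, Gf k l (A ω))
          - 2 * t * (∑ k : Fin n, ∑ l : Fin s, Gf k (Fin.castLE hsn' l) (A ω)))
          + t ^ 2 * (∑ k : Fin s, ∑ l : Fin s,
            Gf (Fin.castLE hsn' k) (Fin.castLE hsn' l) (A ω)) ∂P from rfl]
      have hint12 : Integrable (fun ω => (∑ k : Fin n, ∑ l : Fin n, Gf k l (A ω))
          - 2 * t * (∑ k : Fin n, ∑ l : Fin s, Gf k (Fin.castLE hsn' l) (A ω))) P :=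
        hint1.sub (hint2.const_mul (2 * t))
      have hint3' : Integrable (fun ω => t ^ 2 * (∑ k : Fin s, ∑ l : Fin s,
          Gf (Fin.castLE hsn' k) (Fin.castLE hsn' l) (A ω))) P := hint3.const_mul (t ^ 2)
      have hint2' : Integrable (fun ω => 2 * t * (∑ k : Fin n, ∑ l : Fin s,
          Gf k (Fin.castLE hsn' l) (A ω))) P := hint2.const_mul (2 * t)
      rw [integral_add hint12 hint3']
      rw [integral_sub hint1 hint2']
      rw [integral_const_mul, integral_const_mul]
    rw [key, hS1, hS2, hS3, ht_def, hK_def]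
    field_simp
    ring
  have hbound : ∫ ω, h ω ∂P ≤ K * ∫ ω, m4 ω ∂P := by
    rw [hinth]
    calc (a - b) * (K - (n : ℝ)) ≤ a * (K - (n : ℝ)) := by nlinarith
      _ ≤ a * K := by nlinarith
      _ ≤ K * ∫ ω, m4 ω ∂P := by nlinarith
  -- conclusion
  calc ∫⁻ ω, ENNReal.ofReal (∑ i : Fin n,
        (sVal (Matrix.of (A ω)) i ^ 2 - ((n : ℝ) / (s : ℝ)) *
          sVal (Matrix.of fun (a : Fin s) (b : Fin n) =>
            A ω (Fin.castLE (by nlinarith) a) b) i ^ 2) ^ 2) ∂P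
      ≤ ∫⁻ ω, ENNReal.ofReal (h ω) ∂P :=
        lintegral_mono fun ω => ENNReal.ofReal_le_ofReal (hpoint ω)
    _ = ENNReal.ofReal (∫ ω, h ω ∂P) :=
        (ofReal_integral_eq_lintegral_ofReal hhi (Filter.Eventually.of_forall hpos)).symm
    _ ≤ ENNReal.ofReal (K * ∫ ω, m4 ω ∂P) := ENNReal.ofReal_le_ofReal hbound
    _ = ENNReal.ofReal K * ENNReal.ofReal (∫ ω, m4 ω ∂P) := ENNReal.ofReal_mul hK0
    _ = ENNReal.ofReal (1 * (n : ℝ) ^ 2 / (s : ℝ)) *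
        ∫⁻ ω, ENNReal.ofReal ((⨆ k : Fin n, Real.sqrt (∑ j, ‖A ω k j‖ ^ 2)) ^ 4) ∂P := by
      rw [ofReal_integral_eq_lintegral_ofReal hm4i (Filter.Eventually.of_forall hm4nonneg)]
      rw [hK_def]
      norm_num
      rfl
end

section
/- Let n ≥ 1, let F be ℝ or ℂ, let A be an n×n invertible F-valued matrix with columns X₁, …, X_n, and for each i let d_i := dist(X_i, V_i) be the Euclidean distance from X_i to the hyperplane V_i spanned by the other n−1 columns. Let 1 ≤ L < j ≤ n, let V_{L,j} be the orthogonal complement of the span of X_{L+1}, …, X_{j−1}, X_{j+1}, …, X_n, and let π_{L,j} : F^n → V_{L,j} be the orthogonal projection onto V_{L,j}. Then d_j ≥ |π_{L,j}(X_j)| / ( 1 + Σ_{i=1}^L |π_{L,j}(X_i)| / d_i ). -/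
open Matrix

/-- The `j`-th column of `A`, as a vector of `EuclideanSpace F (Fin n)`. -/
def col {F : Type*} [RCLike F] {n : ℕ} (A : Matrix (Fin n) (Fin n) F) (j : Fin n) :
    EuclideanSpace F (Fin n) := WithLp.toLp 2 (fun k => A k j)

/-- The distance from the `i`-th column of `A` to the hyperplane spanned by the other
columns. -/
noncomputable def dcol {F : Type*} [RCLike F] {n : ℕ} (A : Matrix (Fin n) (Fin n) F)
    (i : Fin n) : ℝ :=
  Metric.infDist (_root_.col A i)
    ((Submodule.span F {x : EuclideanSpace F (Fin n) | ∃ j : Fin n, j ≠ i ∧ x = _root_.col A j}) :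
      Set (EuclideanSpace F (Fin n)))

section aux
variable {F : Type*} [RCLike F] {n : ℕ} {A : Matrix (Fin n) (Fin n) F}

lemma li_col (hA : IsUnit A.det) : LinearIndependent F (_root_.col A) := by
  have := Matrix.linearIndependent_cols_iff_isUnit.mpr ((Matrix.isUnit_iff_isUnit_det A).2 hA)
  exact this.map' (WithLp.linearEquiv 2 F (Fin n → F)).symm.toLinearMap (LinearEquiv.ker _)

lemma span_set_eq (B : Module.Basis (Fin n) F (EuclideanSpace F (Fin n))) (hB : ⇑B = _root_.col A)
    (i : Fin n) :
    {x : EuclideanSpace F (Fin n) | ∃ k : Fin n, k ≠ i ∧ x = _root_.col A k} = ⇑B '' {k | k ≠ i} := by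
  ext x
  simp only [Set.mem_setOf_eq, Set.mem_image, hB]
  exact ⟨fun ⟨k, hk, hx⟩ => ⟨k, hk, hx.symm⟩, fun ⟨k, hk, hx⟩ => ⟨k, hk, hx.symm⟩⟩

lemma abs_repr_mul_dcol_le (B : Module.Basis (Fin n) F (EuclideanSpace F (Fin n)))
    (hB : ⇑B = _root_.col A) (v : EuclideanSpace F (Fin n)) (i : Fin n) :
    ‖B.repr v i‖ * dcol A i ≤ ‖v‖ := by
  by_cases h0 : B.repr v i = 0
  · simp [h0]
  · set a : F := B.repr v i with ha
    set u : EuclideanSpace F (Fin n) := _root_.col A i - a⁻¹ • v with hu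
    have hui : u ∈ Submodule.span F
        {x : EuclideanSpace F (Fin n) | ∃ k : Fin n, k ≠ i ∧ x = _root_.col A k} := by
      rw [span_set_eq B hB, Module.Basis.mem_span_image]
      intro k hk
      simp only [Finset.mem_coe, Finsupp.mem_support_iff] at hk
      simp only [Set.mem_setOf_eq]
      rintro rfl
      apply hk
      have : _root_.col A k = B k := by rw [hB]
      rw [hu, map_sub, _root_.map_smul, this, Module.Basis.repr_self]
      simp [h0, ← ha]
    have hdist : dcol A i ≤ dist (_root_.col A i) u := Metric.infDist_le_dist_of_mem hui
    have hd : dist (_root_.col A i) u = ‖a⁻¹‖ * ‖v‖ := by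
      rw [dist_eq_norm, hu]
      simp [norm_smul]
    rw [hd] at hdist
    have h1 : ‖a‖ * dcol A i ≤ ‖a‖ * (‖a⁻¹‖ * ‖v‖) :=
      mul_le_mul_of_nonneg_left hdist (norm_nonneg a)
    calc ‖a‖ * dcol A i ≤ ‖a‖ * (‖a⁻¹‖ * ‖v‖) := h1
      _ = ‖v‖ := by
        rw [norm_inv, ← mul_assoc, mul_inv_cancel₀ (by simpa using h0), one_mul]

lemma dcol_pos (hA : IsUnit A.det) (i : Fin n) : 0 < dcol A i := by
  haveI : Nonempty (Fin n) := ⟨i⟩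
  have li := li_col hA
  have hcard : Fintype.card (Fin n) = Module.finrank F (EuclideanSpace F (Fin n)) := by
    simp [finrank_euclideanSpace]
  set B := basisOfLinearIndependentOfCardEqFinrank li hcard with hBdef
  have hB : ⇑B = _root_.col A := coe_basisOfLinearIndependentOfCardEqFinrank li hcard
  set W := Submodule.span F
      {x : EuclideanSpace F (Fin n) | ∃ k : Fin n, k ≠ i ∧ x = _root_.col A k} with hW
  have hclosed : IsClosed (W : Set (EuclideanSpace F (Fin n))) :=
    Submodule.closed_of_finiteDimensional W
  have hne : (W : Set (EuclideanSpace F (Fin n))).Nonempty := ⟨0, W.zero_mem⟩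
  have hmem : _root_.col A i ∉ (W : Set (EuclideanSpace F (Fin n))) := by
    rw [hW, span_set_eq B hB]
    intro hmem
    rw [SetLike.mem_coe, Module.Basis.mem_span_image] at hmem
    have : i ∈ (B.repr (_root_.col A i)).support := by
      have : _root_.col A i = B i := by rw [hB]
      rw [this, Module.Basis.repr_self]
      simp
    exact (hmem this) rfl
  exact (hclosed.notMem_iff_infDist_pos hne).1 hmem

end aux

/-- Correlation between distances: with `V_{L,j}` the orthogonal complement of the span of
the columns `X_{L+1}, …, X_n` other than `X_j` (here columns are indexed `0, …, n-1`, so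
these are the columns `X_k` with `L ≤ k`, `k ≠ j`) and `π_{L,j}` the orthogonal projection
onto it, `d_j ≥ |π_{L,j}(X_j)| / (1 + Σ_{i<L} |π_{L,j}(X_i)|/d_i)`. -/
theorem correlation_between_distances {F : Type*} [RCLike F] (n : ℕ)
    (A : Matrix (Fin n) (Fin n) F) (hA : IsUnit A.det)
    (L : ℕ) (hL : 1 ≤ L) (j : Fin n) (hLj : L ≤ (j : ℕ)) :
    let V := (Submodule.span F {x : EuclideanSpace F (Fin n) |
        ∃ k : Fin n, L ≤ (k : ℕ) ∧ k ≠ j ∧ x = _root_.col A k})ᗮ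
    ‖(Submodule.orthogonalProjectionOnto V (_root_.col A j) : EuclideanSpace F (Fin n))‖ /
        (1 + ∑ i ∈ Finset.univ.filter (fun i : Fin n => (i : ℕ) < L),
          ‖(Submodule.orthogonalProjectionOnto V (_root_.col A i) : EuclideanSpace F (Fin n))‖ / dcol A i) ≤
      dcol A j := by
  intro V
  haveI : Nonempty (Fin n) := ⟨j⟩
  have li := li_col hA
  have hcard : Fintype.card (Fin n) = Module.finrank F (EuclideanSpace F (Fin n)) := by
    simp [finrank_euclideanSpace]
  set B := basisOfLinearIndependentOfCardEqFinrank li hcard with hBdef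
  have hB : ⇑B = _root_.col A := coe_basisOfLinearIndependentOfCardEqFinrank li hcard
  set P : EuclideanSpace F (Fin n) →ₗ[F] EuclideanSpace F (Fin n) :=
    V.subtype ∘ₗ ((Submodule.orthogonalProjectionOnto V : EuclideanSpace F (Fin n) →L[F] V) :
      EuclideanSpace F (Fin n) →ₗ[F] V) with hP
  have hPapply : ∀ x, P x = ((Submodule.orthogonalProjectionOnto V x : V) : EuclideanSpace F (Fin n)) :=
    fun _ => rfl
  have hPle : ∀ x, ‖P x‖ ≤ ‖x‖ := by
    intro x
    have h1 : ‖P x‖ = ‖Submodule.orthogonalProjectionOnto V x‖ := rfl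
    rw [h1]
    calc ‖Submodule.orthogonalProjectionOnto V x‖ ≤ ‖(Submodule.orthogonalProjectionOnto V :
          EuclideanSpace F (Fin n) →L[F] V)‖ * ‖x‖ := (Submodule.orthogonalProjectionOnto V).le_opNorm x
      _ ≤ 1 * ‖x‖ :=
          mul_le_mul_of_nonneg_right (Submodule.orthogonalProjectionOnto_norm_le V) (norm_nonneg x)
      _ = ‖x‖ := one_mul _
  have hPzero : ∀ k : Fin n, L ≤ (k : ℕ) → k ≠ j → P (_root_.col A k) = 0 := by
    intro k hk hkj
    have hmem : _root_.col A k ∈ Submodule.span F {x : EuclideanSpace F (Fin n) |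
        ∃ k : Fin n, L ≤ (k : ℕ) ∧ k ≠ j ∧ x = _root_.col A k} :=
      Submodule.subset_span ⟨k, hk, hkj, rfl⟩
    have h0 := Submodule.orthogonalProjectionOnto_orthogonal_apply_eq_zero hmem
    rw [hPapply, h0]
    rfl
  set t := Finset.univ.filter (fun i : Fin n => (i : ℕ) < L) with ht
  set S := ∑ i ∈ t, ‖((Submodule.orthogonalProjectionOnto V (_root_.col A i) : V) :
      EuclideanSpace F (Fin n))‖ / dcol A i with hSdef
  have hS0 : 0 ≤ S := Finset.sum_nonneg fun i _ =>
    div_nonneg (norm_nonneg _) (dcol_pos hA i).le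
  have h1S : (0 : ℝ) < 1 + S := by linarith
  -- the key estimate
  have key : ∀ w ∈ (Submodule.span F {x : EuclideanSpace F (Fin n) |
      ∃ k : Fin n, k ≠ j ∧ x = _root_.col A k} : Set (EuclideanSpace F (Fin n))),
      ‖P (_root_.col A j)‖ ≤ dist (_root_.col A j) w * (1 + S) := by
    intro w hw
    set v : EuclideanSpace F (Fin n) := _root_.col A j - w with hv
    have haj : B.repr v j = 1 := by
      have hwj : B.repr w j = 0 := by
        rw [SetLike.mem_coe, span_set_eq B hB, Module.Basis.mem_span_image] at hw
        by_contra h0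
        exact (hw (by simpa [Finsupp.mem_support_iff] using h0)) rfl
      have hcj : _root_.col A j = B j := by rw [hB]
      rw [hv, map_sub, hcj, Module.Basis.repr_self]
      simp [hwj]
    have hsum : P v = ∑ k, B.repr v k • P (B k) := by
      conv_lhs => rw [← B.sum_repr v]
      rw [map_sum]
      simp only [_root_.map_smul]
    have hsplit : P (_root_.col A j) = P v - ∑ k ∈ t, B.repr v k • P (_root_.col A k) := by
      have h1 : ∑ k ∈ t, B.repr v k • P (B k)
          + ∑ k ∈ Finset.univ.filter (fun k : Fin n => ¬ (k : ℕ) < L),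
            B.repr v k • P (B k) = ∑ k, B.repr v k • P (B k) :=
        Finset.sum_filter_add_sum_filter_not _ _ _
      have h2 : ∑ k ∈ Finset.univ.filter (fun k : Fin n => ¬ (k : ℕ) < L),
          B.repr v k • P (B k) = P (_root_.col A j) := by
        rw [Finset.sum_eq_single_of_mem j]
        · rw [haj, one_smul, hB]
        · simp [hLj, Nat.not_lt.mpr hLj]
        · intro k hk hkj
          simp only [Finset.mem_filter, Nat.not_lt] at hk
          have : P (B k) = 0 := by rw [hB]; exact hPzero k hk.2 hkj
          rw [this, smul_zero]
      have h3 : ∑ k ∈ t, B.repr v k • P (B k) = ∑ k ∈ t, B.repr v k • P (_root_.col A k) := by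
        rw [hB]
      rw [← h2, ← h3]
      rw [eq_sub_iff_add_eq, add_comm]
      rw [hsum, ← h1, h3]
    have hterm : ∀ k ∈ t, ‖B.repr v k • P (_root_.col A k)‖
        ≤ ‖v‖ * (‖P (_root_.col A k)‖ / dcol A k) := by
      intro k _
      rw [norm_smul]
      have hd := dcol_pos hA k
      have h1 := abs_repr_mul_dcol_le B hB v k
      calc ‖B.repr v k‖ * ‖P (_root_.col A k)‖
          = (‖B.repr v k‖ * dcol A k) * (‖P (_root_.col A k)‖ / dcol A k) := by
            field_simp
        _ ≤ ‖v‖ * (‖P (_root_.col A k)‖ / dcol A k) :=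
            mul_le_mul_of_nonneg_right h1 (div_nonneg (norm_nonneg _) hd.le)
    have hSP : S = ∑ k ∈ t, ‖P (_root_.col A k)‖ / dcol A k := rfl
    have hbound : ‖P (_root_.col A j)‖ ≤ ‖v‖ * (1 + S) := by
      rw [hsplit]
      calc ‖P v - ∑ k ∈ t, B.repr v k • P (_root_.col A k)‖
          ≤ ‖P v‖ + ‖∑ k ∈ t, B.repr v k • P (_root_.col A k)‖ := norm_sub_le _ _
        _ ≤ ‖v‖ + ∑ k ∈ t, ‖B.repr v k • P (_root_.col A k)‖ :=
            add_le_add (hPle v) (norm_sum_le _ _)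
        _ ≤ ‖v‖ + ∑ k ∈ t, ‖v‖ * (‖P (_root_.col A k)‖ / dcol A k) :=
            add_le_add le_rfl (Finset.sum_le_sum hterm)
        _ = ‖v‖ * (1 + S) := by
            rw [← Finset.mul_sum, hSP]; ring
    have hdist : dist (_root_.col A j) w = ‖v‖ := by rw [dist_eq_norm, hv]
    rw [hdist]
    exact hbound
  -- conclude
  have hgoal : ‖P (_root_.col A j)‖ / (1 + S) ≤ dcol A j := by
    by_contra hcon
    push_neg at hcon
    rw [dcol] at hcon
    have hne : ((Submodule.span F {x : EuclideanSpace F (Fin n) |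
        ∃ k : Fin n, k ≠ j ∧ x = _root_.col A k}) :
        Set (EuclideanSpace F (Fin n))).Nonempty := ⟨0, Submodule.zero_mem _⟩
    obtain ⟨w, hw, hwlt⟩ := (Metric.infDist_lt_iff hne).1 hcon
    have h2 := key w hw
    have h3 : dist (_root_.col A j) w * (1 + S) < ‖P (_root_.col A j)‖ := (lt_div_iff₀ h1S).mp hwlt
    linarith
  exact hgoal
end

section
/- For any two n×n complex self-adjoint matrices M and M', one has Σ_{i=1}^n ( σᵢ(M) − σᵢ(M') )² ≤ ‖M − M'‖_F². As a corollary, for any two n×n complex matrices A and B, one has Σ_{i=1}^n ( σᵢ(A)² − σᵢ(B)² )² ≤ ‖A*A − B*B‖_F². -/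
open Matrix

namespace HW

open Polynomial Finset
open scoped ComplexOrder

/-- decreasing sort of a tuple -/
noncomputable def sortD {n : ℕ} (f : Fin n → ℝ) (i : Fin n) : ℝ :=
  f (Tuple.sort f i.rev)

lemma antitone_sortD {n : ℕ} (f : Fin n → ℝ) : Antitone (sortD f) := by
  intro i j hij
  exact Tuple.monotone_sort f (by simpa using Fin.rev_le_rev.mpr hij)

lemma comp_sort_unique {n : ℕ} {f g : Fin n → ℝ}
    (h : Multiset.map f Finset.univ.val = Multiset.map g Finset.univ.val) :
    f ∘ Tuple.sort f = g ∘ Tuple.sort g := by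
  apply List.ofFn_injective
  refine List.Perm.eq_of_sortedLE (List.sortedLE_ofFn_iff.2 (Tuple.monotone_sort f))
    (List.sortedLE_ofFn_iff.2 (Tuple.monotone_sort g)) ?_
  have h1 := Equiv.Perm.ofFn_comp_perm (Tuple.sort f) f
  have h2 := Equiv.Perm.ofFn_comp_perm (Tuple.sort g) g
  refine h1.trans (.trans ?_ h2.symm)
  rw [← Multiset.coe_eq_coe]
  simpa [List.ofFn_eq_map, ← Multiset.map_coe] using h

lemma sortD_unique {n : ℕ} {f g : Fin n → ℝ}
    (h : Multiset.map f Finset.univ.val = Multiset.map g Finset.univ.val) :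
    sortD f = sortD g := by
  funext i
  exact congrFun (comp_sort_unique h) i.rev

lemma multiset_map_comp_perm {n : ℕ} (f : Fin n → ℝ) (σ : Equiv.Perm (Fin n)) :
    Multiset.map (f ∘ σ) Finset.univ.val = Multiset.map f Finset.univ.val := by
  rw [← Multiset.map_map]
  congr 1
  have : Multiset.map (⇑σ) Finset.univ.val = (Finset.univ.map σ.toEmbedding).val := rfl
  rw [this, Finset.map_univ_equiv]

lemma multiset_map_sortD {n : ℕ} (f : Fin n → ℝ) :
    Multiset.map (sortD f) Finset.univ.val = Multiset.map f Finset.univ.val := by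
  have : sortD f = (f ∘ Tuple.sort f) ∘ Fin.revPerm := rfl
  rw [this, multiset_map_comp_perm, multiset_map_comp_perm]

/-- sortD of squares is square of sortD of abs -/
lemma sortD_sq {n : ℕ} (f : Fin n → ℝ) (i : Fin n) :
    sortD (fun j => f j ^ 2) i = sortD (fun j => |f j|) i ^ 2 := by
  set g : Fin n → ℝ := fun j => |f j|
  set σ := Tuple.sort g
  have hmono : Monotone (fun j => (g ∘ σ) j ^ 2) := by
    intro x y hxy
    have := Tuple.monotone_sort g hxy
    have h0 : 0 ≤ (g ∘ σ) x := abs_nonneg _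
    simp only [Function.comp_apply] at this h0 ⊢
    nlinarith
  have hms : Multiset.map (fun j => f j ^ 2) Finset.univ.val
      = Multiset.map (fun j => (g ∘ σ) j ^ 2) Finset.univ.val := by
    have : (fun j => (g ∘ σ) j ^ 2) = (fun j => f j ^ 2) ∘ σ := by
      funext j; simp [g, sq_abs]
    rw [this, multiset_map_comp_perm]
  have h1 := comp_sort_unique hms
  have h2 : Tuple.sort (fun j => (g ∘ σ) j ^ 2) = Equiv.refl _ :=
    Tuple.sort_eq_refl_iff_monotone.2 hmono
  have h3 := congrFun h1 i.rev
  rw [h2] at h3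
  simpa [sortD] using h3


lemma charpoly_unitary_conj (U : Matrix.unitaryGroup (Fin n) ℂ) (D : Matrix (Fin n) (Fin n) ℂ) :
    ((U : Matrix (Fin n) (Fin n) ℂ) * D * star (U : Matrix (Fin n) (Fin n) ℂ)).charpoly
      = D.charpoly := by
  set Uc := (U : Matrix (Fin n) (Fin n) ℂ)
  have hU : Uc * star Uc = 1 := Matrix.mem_unitaryGroup_iff.mp U.2
  have hU' : star Uc * Uc = 1 := Matrix.mem_unitaryGroup_iff'.mp U.2
  have key : charmatrix (Uc * D * star Uc)
      = (C : ℂ →+* ℂ[X]).mapMatrix Uc * charmatrix D * (C : ℂ →+* ℂ[X]).mapMatrix (star Uc) := by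
    simp only [charmatrix, mul_sub, sub_mul, ← _root_.map_mul]
    congr 1
    have hc := (Matrix.scalar_commute (X : ℂ[X]) (fun r' => Commute.all _ _)
      ((C : ℂ →+* ℂ[X]).mapMatrix Uc)).eq
    rw [← hc, mul_assoc, ← _root_.map_mul, hU, _root_.map_one, mul_one]
  rw [Matrix.charpoly, key, det_mul, det_mul, mul_comm, ← mul_assoc, ← det_mul,
    ← _root_.map_mul ((C : ℂ →+* ℂ[X]).mapMatrix) (star Uc) Uc, hU', _root_.map_one, det_one, one_mul, Matrix.charpoly]

lemma charpoly_diag_real (d : Fin n → ℝ) :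
    (Matrix.diagonal ((Complex.ofReal) ∘ d)).charpoly
      = ∏ i : Fin n, (X - C ((d i : ℂ))) := by
  rw [Matrix.charpoly_of_upperTriangular _ (Matrix.blockTriangular_diagonal _)]
  simp

/-- Multiset of eigenvalues from an explicit diagonalization. -/
lemma eig_multiset {A : Matrix (Fin n) (Fin n) ℂ} (hA : A.IsHermitian)
    (U : Matrix.unitaryGroup (Fin n) ℂ) (d : Fin n → ℝ)
    (h : A = (U : Matrix (Fin n) (Fin n) ℂ) * Matrix.diagonal ((Complex.ofReal) ∘ d)
      * star (U : Matrix (Fin n) (Fin n) ℂ)) :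
    Multiset.map hA.eigenvalues Finset.univ.val = Multiset.map d Finset.univ.val := by
  have h1 : A.charpoly = ∏ i : Fin n, (X - C ((d i : ℂ))) := by
    rw [h, charpoly_unitary_conj, charpoly_diag_real]
  have h2 : A.charpoly = ∏ i : Fin n, (X - C ((hA.eigenvalues i : ℂ))) := by
    conv_lhs => rw [hA.spectral_theorem]
    rw [Unitary.conjStarAlgAut_apply, charpoly_unitary_conj]
    exact charpoly_diag_real _
  have h3 : (∏ i : Fin n, (X - C ((hA.eigenvalues i : ℂ))))
      = ∏ i : Fin n, (X - C ((d i : ℂ))) := by rw [← h1, ← h2]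
  have h4 : Multiset.map (fun i => ((hA.eigenvalues i : ℂ))) Finset.univ.val
      = Multiset.map (fun i => ((d i : ℂ))) Finset.univ.val := by
    have r1 := Polynomial.roots_multiset_prod_X_sub_C
       (Multiset.map (fun i => ((hA.eigenvalues i : ℂ))) Finset.univ.val)
    have r2 := Polynomial.roots_multiset_prod_X_sub_C
       (Multiset.map (fun i => ((d i : ℂ))) Finset.univ.val)
    rw [← r1, ← r2]
    congr 1
    simpa [Multiset.map_map, Finset.prod, Function.comp_def] using h3
  have := Multiset.map_injective Complex.ofReal_injective
  apply this
  simpa [Multiset.map_map, Function.comp_def] using h4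



/-- Extension of a tuple to ℕ by zero. -/
noncomputable def ext (a : Fin n → ℝ) : ℕ → ℝ := fun k => if h : k < n then a ⟨k, h⟩ else 0

lemma ext_antitone {a : Fin n → ℝ} (ha : Antitone a) (ha0 : ∀ i, 0 ≤ a i) :
    Antitone (ext a) := by
  refine antitone_nat_of_succ_le fun k => ?_
  unfold ext
  split_ifs with h1 h2 h2
  · exact ha (by simp [Fin.le_def])
  · omega
  · exact ha0 _
  · exact le_refl 0

lemma ext_repr {a : Fin n → ℝ} (i : Fin n) :
    a i = ∑ k ∈ range n, if (i : ℕ) ≤ k then ext a k - ext a (k + 1) else 0 := by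
  have hfil : (range n).filter (fun k => (i : ℕ) ≤ k) = Finset.Ico (i : ℕ) n := by
    ext k; simp only [Finset.mem_filter, Finset.mem_Ico, Finset.mem_range]; omega
  rw [← Finset.sum_filter, hfil, Finset.sum_Ico_eq_sub _ (le_of_lt i.2),
    Finset.sum_range_sub' (ext a), Finset.sum_range_sub' (ext a)]
  have h1 : ext a n = 0 := by simp [ext]
  have h2 : ext a (i : ℕ) = a i := by simp [ext, i.2]
  rw [h1, h2]; ring

/-- Generic first-stage expansion. -/
lemma step1 {a : Fin n → ℝ} (c : Fin n → ℝ) :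
    ∑ i, a i * c i = ∑ k ∈ range n,
      (ext a k - ext a (k + 1)) * ∑ i : Fin n, if (i : ℕ) ≤ k then c i else 0 := by
  calc ∑ i : Fin n, a i * c i
      = ∑ i : Fin n, ∑ k ∈ range n, (if (i : ℕ) ≤ k then ext a k - ext a (k+1) else 0) * c i := by
        refine Finset.sum_congr rfl fun i _ => ?_
        rw [← Finset.sum_mul, ← ext_repr]
    _ = ∑ k ∈ range n, ∑ i : Fin n, (if (i : ℕ) ≤ k then ext a k - ext a (k+1) else 0) * c i :=
        Finset.sum_comm
    _ = ∑ k ∈ range n, (ext a k - ext a (k + 1)) * ∑ i : Fin n, if (i : ℕ) ≤ k then c i else 0 := by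
        refine Finset.sum_congr rfl fun k _ => ?_
        rw [Finset.mul_sum]
        refine Finset.sum_congr rfl fun i _ => ?_
        split_ifs <;> ring

/-- The key doubly-stochastic rearrangement bound. -/
lemma ds_bound (s : Fin n → Fin n → ℝ) (a b : Fin n → ℝ)
    (hs0 : ∀ i j, 0 ≤ s i j) (hrow : ∀ i, ∑ j, s i j = 1) (hcol : ∀ j, ∑ i, s i j = 1)
    (ha : Antitone a) (hb : Antitone b) (ha0 : ∀ i, 0 ≤ a i) (hb0 : ∀ i, 0 ≤ b i) :
    ∑ i, ∑ j, s i j * (a i * b j) ≤ ∑ i, a i * b i := by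
  set α : ℕ → ℝ := fun k => ext a k - ext a (k + 1) with hα
  set β : ℕ → ℝ := fun k => ext b k - ext b (k + 1) with hβ
  have hα0 : ∀ k, 0 ≤ α k := fun k => sub_nonneg.2 (ext_antitone ha ha0 (Nat.le_succ k))
  have hβ0 : ∀ k, 0 ≤ β k := fun k => sub_nonneg.2 (ext_antitone hb hb0 (Nat.le_succ k))
  have hL : ∑ i, ∑ j, s i j * (a i * b j)
      = ∑ k ∈ range n, ∑ l ∈ range n, α k * (β l *
          (∑ i : Fin n, if (i:ℕ) ≤ k then (∑ j : Fin n, if (j:ℕ) ≤ l then s i j else 0) else 0)) := by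
    calc ∑ i, ∑ j, s i j * (a i * b j)
        = ∑ i, a i * (∑ j, b j * s i j) := by
          refine Finset.sum_congr rfl fun i _ => ?_
          rw [Finset.mul_sum]
          exact Finset.sum_congr rfl fun j _ => by ring
      _ = ∑ k ∈ range n, α k * ∑ i : Fin n, if (i:ℕ) ≤ k then (∑ j, b j * s i j) else 0 :=
          step1 _
      _ = ∑ k ∈ range n, α k * ∑ j, b j * (∑ i : Fin n, if (i:ℕ) ≤ k then s i j else 0) := by
          refine Finset.sum_congr rfl fun k _ => ?_
          congr 1
          calc (∑ i : Fin n, if (i:ℕ) ≤ k then (∑ j, b j * s i j) else 0)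
              = ∑ i : Fin n, ∑ j, b j * (if (i:ℕ) ≤ k then s i j else 0) := by
                refine Finset.sum_congr rfl fun i _ => ?_
                split_ifs with h
                · rfl
                · simp
            _ = ∑ j, ∑ i : Fin n, b j * (if (i:ℕ) ≤ k then s i j else 0) := Finset.sum_comm
            _ = ∑ j, b j * (∑ i : Fin n, if (i:ℕ) ≤ k then s i j else 0) := by
                refine Finset.sum_congr rfl fun j _ => (Finset.mul_sum _ _ _).symm
      _ = ∑ k ∈ range n, α k * ∑ l ∈ range n, β l *
            (∑ j : Fin n, if (j:ℕ) ≤ l then (∑ i : Fin n, if (i:ℕ) ≤ k then s i j else 0) else 0) := by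
          refine Finset.sum_congr rfl fun k _ => ?_
          congr 1
          exact step1 _
      _ = ∑ k ∈ range n, ∑ l ∈ range n, α k * (β l *
            (∑ i : Fin n, if (i:ℕ) ≤ k then (∑ j : Fin n, if (j:ℕ) ≤ l then s i j else 0) else 0)) := by
          refine Finset.sum_congr rfl fun k _ => ?_
          rw [Finset.mul_sum]
          refine Finset.sum_congr rfl fun l _ => ?_
          congr 2
          -- swap the two indicator sums
          calc (∑ j : Fin n, if (j:ℕ) ≤ l then (∑ i : Fin n, if (i:ℕ) ≤ k then s i j else 0) else 0)
              = ∑ j : Fin n, ∑ i : Fin n, (if (j:ℕ) ≤ l then (if (i:ℕ) ≤ k then s i j else 0) else 0) := by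
                refine Finset.sum_congr rfl fun j _ => ?_
                split_ifs with h
                · rfl
                · simp
            _ = ∑ i : Fin n, ∑ j : Fin n, (if (j:ℕ) ≤ l then (if (i:ℕ) ≤ k then s i j else 0) else 0) :=
                Finset.sum_comm
            _ = ∑ i : Fin n, if (i:ℕ) ≤ k then (∑ j : Fin n, if (j:ℕ) ≤ l then s i j else 0) else 0 := by
                refine Finset.sum_congr rfl fun i _ => ?_
                split_ifs with h
                · refine Finset.sum_congr rfl fun j _ => ?_
                  split_ifs <;> rfl
                · refine Finset.sum_eq_zero fun j _ => ?_
                  split_ifs <;> rfl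
  have hR : ∑ i, a i * b i
      = ∑ k ∈ range n, ∑ l ∈ range n, α k * (β l *
          (∑ i : Fin n, if (i:ℕ) ≤ k then (if (i:ℕ) ≤ l then (1:ℝ) else 0) else 0)) := by
    calc ∑ i, a i * b i
        = ∑ k ∈ range n, α k * ∑ i : Fin n, if (i:ℕ) ≤ k then b i else 0 := step1 _
      _ = ∑ k ∈ range n, α k * ∑ i : Fin n, b i * (if (i:ℕ) ≤ k then (1:ℝ) else 0) := by
          refine Finset.sum_congr rfl fun k _ => ?_
          congr 1
          refine Finset.sum_congr rfl fun i _ => by split_ifs <;> simp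
      _ = ∑ k ∈ range n, α k * ∑ l ∈ range n, β l *
            (∑ i : Fin n, if (i:ℕ) ≤ l then (if (i:ℕ) ≤ k then (1:ℝ) else 0) else 0) := by
          refine Finset.sum_congr rfl fun k _ => ?_
          congr 1
          exact step1 _
      _ = ∑ k ∈ range n, ∑ l ∈ range n, α k * (β l *
            (∑ i : Fin n, if (i:ℕ) ≤ k then (if (i:ℕ) ≤ l then (1:ℝ) else 0) else 0)) := by
          refine Finset.sum_congr rfl fun k _ => ?_
          rw [Finset.mul_sum]
          refine Finset.sum_congr rfl fun l _ => ?_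
          congr 2
          refine Finset.sum_congr rfl fun i _ => ?_
          split_ifs <;> rfl
  rw [hL, hR]
  refine Finset.sum_le_sum fun k _ => Finset.sum_le_sum fun l _ => ?_
  refine mul_le_mul_of_nonneg_left (mul_le_mul_of_nonneg_left ?_ (hβ0 l)) (hα0 k)
  -- T k l ≤ N k l
  rcases le_total k l with hkl | hkl
  · calc (∑ i : Fin n, if (i:ℕ) ≤ k then (∑ j : Fin n, if (j:ℕ) ≤ l then s i j else 0) else 0)
        ≤ ∑ i : Fin n, if (i:ℕ) ≤ k then (1:ℝ) else 0 := by
          refine Finset.sum_le_sum fun i _ => ?_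
          split_ifs with h
          · rw [← hrow i]
            refine Finset.sum_le_sum fun j _ => ?_
            split_ifs <;> [exact le_refl _; exact hs0 i j]
          · exact le_refl 0
      _ = ∑ i : Fin n, if (i:ℕ) ≤ k then (if (i:ℕ) ≤ l then (1:ℝ) else 0) else 0 := by
          refine Finset.sum_congr rfl fun i _ => ?_
          by_cases h : (i:ℕ) ≤ k
          · simp [h, h.trans hkl]
          · simp [h]
  · calc (∑ i : Fin n, if (i:ℕ) ≤ k then (∑ j : Fin n, if (j:ℕ) ≤ l then s i j else 0) else 0)
        ≤ ∑ i : Fin n, (∑ j : Fin n, if (j:ℕ) ≤ l then s i j else 0) := by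
          refine Finset.sum_le_sum fun i _ => ?_
          split_ifs with h
          · exact le_refl _
          · exact Finset.sum_nonneg fun j _ => by split_ifs <;> [exact hs0 i j; exact le_refl 0]
      _ = ∑ j : Fin n, if (j:ℕ) ≤ l then (1:ℝ) else 0 := by
          rw [Finset.sum_comm]
          refine Finset.sum_congr rfl fun j _ => ?_
          split_ifs with h
          · exact hcol j
          · exact Finset.sum_eq_zero fun i _ => rfl
      _ = ∑ i : Fin n, if (i:ℕ) ≤ k then (if (i:ℕ) ≤ l then (1:ℝ) else 0) else 0 := by
          refine Finset.sum_congr rfl fun i _ => ?_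
          by_cases h : (i:ℕ) ≤ l
          · simp [h, h.trans hkl]
          · simp [h]
  


lemma coe_eq' : (RCLike.ofReal : ℝ → ℂ) = Complex.ofReal := rfl

lemma herm_decomp (M : Matrix (Fin n) (Fin n) ℂ) (hM : M.IsHermitian) :
    M = (hM.eigenvectorUnitary : Matrix (Fin n) (Fin n) ℂ)
      * Matrix.diagonal (Complex.ofReal ∘ hM.eigenvalues)
      * star (hM.eigenvectorUnitary : Matrix (Fin n) (Fin n) ℂ) := by
  rw [← coe_eq']; exact hM.spectral_theorem

lemma herm_sq_decomp (M : Matrix (Fin n) (Fin n) ℂ) (hM : M.IsHermitian) :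
    Mᴴ * M = (hM.eigenvectorUnitary : Matrix (Fin n) (Fin n) ℂ)
      * Matrix.diagonal (Complex.ofReal ∘ (fun i => hM.eigenvalues i ^ 2))
      * star (hM.eigenvectorUnitary : Matrix (Fin n) (Fin n) ℂ) := by
  have h := herm_decomp M hM
  set U := (hM.eigenvectorUnitary : Matrix (Fin n) (Fin n) ℂ)
  set D := Matrix.diagonal (Complex.ofReal ∘ hM.eigenvalues) with hD
  have hU : star U * U = 1 := Matrix.mem_unitaryGroup_iff'.mp hM.eigenvectorUnitary.2
  calc Mᴴ * M = M * M := by rw [hM]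
    _ = (U * D * star U) * (U * D * star U) := by rw [← h]
    _ = U * D * ((star U * U) * (D * star U)) := by noncomm_ring
    _ = U * (D * D) * star U := by rw [hU, one_mul]; noncomm_ring
    _ = U * Matrix.diagonal (Complex.ofReal ∘ (fun i => hM.eigenvalues i ^ 2)) * star U := by
      have hfun : (fun i => (Complex.ofReal ∘ hM.eigenvalues) i * (Complex.ofReal ∘ hM.eigenvalues) i)
          = Complex.ofReal ∘ (fun i => hM.eigenvalues i ^ 2) := by
        funext i; simp [pow_two]
      rw [hD, Matrix.diagonal_mul_diagonal, hfun]

lemma re_trace_conjTranspose_mul_self (X : Matrix (Fin n) (Fin n) ℂ) :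
    (Matrix.trace (Xᴴ * X)).re = ∑ i, ∑ j, ‖X i j‖ ^ 2 := by
  simp only [Matrix.trace, Matrix.diag, mul_apply, conjTranspose_apply]
  rw [Complex.re_sum]
  rw [Finset.sum_comm]
  refine Finset.sum_congr rfl fun i _ => ?_
  rw [Complex.re_sum]
  refine Finset.sum_congr rfl fun j _ => ?_
  rw [mul_comm, Complex.star_def, Complex.mul_conj']
  simp [← Complex.ofReal_pow]

lemma re_trace_DWE (d f : Fin n → ℝ) (W : Matrix (Fin n) (Fin n) ℂ) :
    (Matrix.trace (Matrix.diagonal (Complex.ofReal ∘ d) * W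
      * Matrix.diagonal (Complex.ofReal ∘ f) * Wᴴ)).re
    = ∑ i, ∑ j, d i * f j * ‖W i j‖ ^ 2 := by
  have key : ∀ i, (Matrix.diagonal (Complex.ofReal ∘ d) * W
      * Matrix.diagonal (Complex.ofReal ∘ f) * Wᴴ) i i
      = ∑ j, ((d i * f j * ‖W i j‖ ^ 2 : ℝ) : ℂ) := by
    intro i
    rw [mul_apply]
    refine Finset.sum_congr rfl fun j _ => ?_
    rw [mul_apply]
    rw [Finset.sum_eq_single j]
    · simp only [conjTranspose_apply]
      rw [mul_apply, Finset.sum_eq_single i]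
      · simp only [Matrix.diagonal_apply_eq, Function.comp_apply]
        have hc : W i j * (starRingEnd ℂ) (W i j) = ((‖W i j‖ : ℂ)) ^ 2 := Complex.mul_conj' _
        have : ((d i : ℝ) : ℂ) * W i j * ((f j : ℝ) : ℂ) * star (W i j)
            = ((d i : ℝ) : ℂ) * ((f j : ℝ) : ℂ) * (W i j * star (W i j)) := by ring
        rw [this, Complex.star_def, hc]
        push_cast
        ring
      · intro b _ hb; simp [Matrix.diagonal_apply_ne' _ hb]
      · intro h; exact absurd (Finset.mem_univ i) h
    · intro b _ hb; simp [Matrix.diagonal_apply_ne _ hb]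
    · intro h; exact absurd (Finset.mem_univ j) h
  simp only [Matrix.trace, Matrix.diag]
  rw [Complex.re_sum]
  refine Finset.sum_congr rfl fun i _ => ?_
  rw [key i, Complex.re_sum]
  refine Finset.sum_congr rfl fun j _ => ?_
  exact Complex.ofReal_re _



variable {n : ℕ}

lemma coe_eq : (RCLike.ofReal : ℝ → ℂ) = Complex.ofReal := rfl

lemma sVal_eq {M : Matrix (Fin n) (Fin n) ℂ} (hM : M.IsHermitian) :
    sVal M = sortD (fun i => |hM.eigenvalues i|) := by
  set e := hM.eigenvalues with he
  have hmul := eig_multiset (Matrix.isHermitian_conjTranspose_mul_self M) hM.eigenvectorUnitary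
    (fun i => e i ^ 2) (herm_sq_decomp M hM)
  funext i
  have h1 : sVal M i
      = Real.sqrt (sortD (Matrix.isHermitian_conjTranspose_mul_self M).eigenvalues i) := rfl
  rw [h1, sortD_unique hmul, sortD_sq]
  exact Real.sqrt_sq (abs_nonneg _)

lemma sVal_nonneg (M : Matrix (Fin n) (Fin n) ℂ) (i : Fin n) : 0 ≤ sVal M i :=
  Real.sqrt_nonneg _

lemma sum_sVal_sq (M : Matrix (Fin n) (Fin n) ℂ) :
    ∑ i, sVal M i ^ 2 = frobSq M := by
  set ν := (Matrix.isHermitian_conjTranspose_mul_self M).eigenvalues with hν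
  have hnn : ∀ j, 0 ≤ ν j := (Matrix.posSemidef_conjTranspose_mul_self M).eigenvalues_nonneg
  have h1 : ∀ i, sVal M i ^ 2 = ν (Tuple.sort ν i.rev) := fun i =>
    Real.sq_sqrt (hnn _)
  have h2 : ∑ i, sVal M i ^ 2 = ∑ i, ν i := by
    rw [Finset.sum_congr rfl fun i _ => h1 i]
    exact Equiv.sum_comp (Fin.revPerm.trans (Tuple.sort ν)) ν
  have h3 : (Matrix.trace (Mᴴ * M)).re = ∑ i, ν i := by
    conv_lhs => rw [herm_decomp _ (Matrix.isHermitian_conjTranspose_mul_self M)]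
    rw [Matrix.trace_mul_comm]
    rw [← mul_assoc]
    have hU : star ((Matrix.isHermitian_conjTranspose_mul_self M).eigenvectorUnitary
        : Matrix (Fin n) (Fin n) ℂ)
        * ((Matrix.isHermitian_conjTranspose_mul_self M).eigenvectorUnitary
        : Matrix (Fin n) (Fin n) ℂ) = 1 :=
      Matrix.mem_unitaryGroup_iff'.mp (Matrix.isHermitian_conjTranspose_mul_self M).eigenvectorUnitary.2
    rw [hU, one_mul, Matrix.trace_diagonal]
    rw [Complex.re_sum]
    exact Finset.sum_congr rfl fun i _ => Complex.ofReal_re _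
  rw [h2, ← h3, re_trace_conjTranspose_mul_self]
  rfl

lemma unit_row {W : Matrix (Fin n) (Fin n) ℂ} (hW : W ∈ Matrix.unitaryGroup (Fin n) ℂ)
    (i : Fin n) : ∑ j, ‖W i j‖ ^ 2 = 1 := by
  have h := congrArg (fun X : Matrix (Fin n) (Fin n) ℂ => (X i i).re)
    (Matrix.mem_unitaryGroup_iff.mp hW)
  simp only [Matrix.one_apply_eq, Complex.one_re] at h
  rw [← h, mul_apply, Complex.re_sum]
  refine Finset.sum_congr rfl fun j _ => ?_
  rw [Matrix.star_eq_conjTranspose, conjTranspose_apply, Complex.star_def, Complex.mul_conj']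
  simp [← Complex.ofReal_pow]

lemma unit_col {W : Matrix (Fin n) (Fin n) ℂ} (hW : W ∈ Matrix.unitaryGroup (Fin n) ℂ)
    (j : Fin n) : ∑ i, ‖W i j‖ ^ 2 = 1 := by
  have h := congrArg (fun X : Matrix (Fin n) (Fin n) ℂ => (X j j).re)
    (Matrix.mem_unitaryGroup_iff'.mp hW)
  simp only [Matrix.one_apply_eq, Complex.one_re] at h
  rw [← h, mul_apply, Complex.re_sum]
  refine Finset.sum_congr rfl fun i _ => ?_
  rw [Matrix.star_eq_conjTranspose, conjTranspose_apply, Complex.star_def]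
  rw [mul_comm, Complex.mul_conj']
  simp [← Complex.ofReal_pow]

lemma trace_le {M M' : Matrix (Fin n) (Fin n) ℂ} (hM : M.IsHermitian) (hM' : M'.IsHermitian) :
    (Matrix.trace (M * M')).re ≤ ∑ i, sVal M i * sVal M' i := by
  set U := (hM.eigenvectorUnitary : Matrix (Fin n) (Fin n) ℂ) with hUdef
  set V := (hM'.eigenvectorUnitary : Matrix (Fin n) (Fin n) ℂ) with hVdef
  set e := hM.eigenvalues with he
  set f := hM'.eigenvalues with hf
  set W : Matrix (Fin n) (Fin n) ℂ := star U * V with hW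
  have hWu : W ∈ Matrix.unitaryGroup (Fin n) ℂ :=
    mul_mem (Unitary.star_mem hM.eigenvectorUnitary.2) hM'.eigenvectorUnitary.2
  have htr : Matrix.trace (M * M')
      = Matrix.trace (Matrix.diagonal (Complex.ofReal ∘ e) * W
        * Matrix.diagonal (Complex.ofReal ∘ f) * Wᴴ) := by
    conv_lhs => rw [herm_decomp M hM, herm_decomp M' hM']
    rw [← hUdef, ← hVdef, ← he, ← hf]
    have h1 : (U * Matrix.diagonal (Complex.ofReal ∘ e) * star U)
        * (V * Matrix.diagonal (Complex.ofReal ∘ f) * star V)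
        = U * (Matrix.diagonal (Complex.ofReal ∘ e) * (star U * V)
          * Matrix.diagonal (Complex.ofReal ∘ f) * star V) := by
      noncomm_ring
    rw [h1, Matrix.trace_mul_comm]
    congr 1
    have h2 : Wᴴ = star V * U := by
      rw [← Matrix.star_eq_conjTranspose, hW, Matrix.star_mul, star_star]
    rw [h2, hW]
    noncomm_ring
  have hre : (Matrix.trace (M * M')).re = ∑ i, ∑ j, e i * f j * ‖W i j‖ ^ 2 := by
    rw [htr, re_trace_DWE]
  rw [hre]
  have step1 : ∑ i, ∑ j, e i * f j * ‖W i j‖ ^ 2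
      ≤ ∑ i, ∑ j, |e i| * |f j| * ‖W i j‖ ^ 2 := by
    refine Finset.sum_le_sum fun i _ => Finset.sum_le_sum fun j _ => ?_
    refine mul_le_mul_of_nonneg_right ?_ (by positivity)
    calc e i * f j ≤ |e i * f j| := le_abs_self _
      _ = |e i| * |f j| := abs_mul _ _
  refine step1.trans ?_
  set π : Equiv.Perm (Fin n) := Fin.revPerm.trans (Tuple.sort (fun i => |e i|)) with hπ
  set ρ : Equiv.Perm (Fin n) := Fin.revPerm.trans (Tuple.sort (fun i => |f i|)) with hρ
  have hsort : ∑ i, ∑ j, |e i| * |f j| * ‖W i j‖ ^ 2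
      = ∑ i, ∑ j, ‖W (π i) (ρ j)‖ ^ 2 * (sortD (fun i => |e i|) i * sortD (fun i => |f i|) j) := by
    rw [← Equiv.sum_comp π (fun i => ∑ j, |e i| * |f j| * ‖W i j‖ ^ 2)]
    refine Finset.sum_congr rfl fun i _ => ?_
    rw [← Equiv.sum_comp ρ (fun j => |e (π i)| * |f j| * ‖W (π i) j‖ ^ 2)]
    refine Finset.sum_congr rfl fun j _ => ?_
    have h1 : sortD (fun i => |e i|) i = |e (π i)| := rfl
    have h2 : sortD (fun i => |f i|) j = |f (ρ j)| := rfl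
    rw [h1, h2]; ring
  rw [hsort]
  have hmain := ds_bound (fun i j => ‖W (π i) (ρ j)‖ ^ 2)
    (sortD (fun i => |e i|)) (sortD (fun i => |f i|))
    (fun i j => by positivity)
    (fun i => by rw [Equiv.sum_comp ρ (fun j => ‖W (π i) j‖ ^ 2)]; exact unit_row hWu _)
    (fun j => by rw [Equiv.sum_comp π (fun i => ‖W i (ρ j)‖ ^ 2)]; exact unit_col hWu _)
    (antitone_sortD _) (antitone_sortD _)
    (fun i => abs_nonneg _) (fun i => abs_nonneg _)
  refine hmain.trans_eq ?_
  rw [sVal_eq hM, sVal_eq hM']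

lemma frob_expand {M M' : Matrix (Fin n) (Fin n) ℂ} (hM : M.IsHermitian) (hM' : M'.IsHermitian) :
    frobSq (M - M') = frobSq M + frobSq M' - 2 * (Matrix.trace (M * M')).re := by
  have hfe : ∀ X : Matrix (Fin n) (Fin n) ℂ, frobSq X = (Matrix.trace (Xᴴ * X)).re :=
    fun X => (re_trace_conjTranspose_mul_self X).symm
  rw [hfe, hfe, hfe]
  have hZ : (M - M')ᴴ = M - M' := by rw [conjTranspose_sub, hM, hM']
  rw [hZ]
  have hexp : (M - M') * (M - M') = M * M - M * M' - M' * M + M' * M' := by noncomm_ring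
  rw [hexp]
  have hMM : Mᴴ * M = M * M := by rw [hM]
  have hMM' : M'ᴴ * M' = M' * M' := by rw [hM']
  rw [hMM, hMM']
  rw [Matrix.trace_add, Matrix.trace_sub, Matrix.trace_sub, Matrix.trace_mul_comm M' M]
  simp only [Complex.add_re, Complex.sub_re]
  ring

theorem part1 (M M' : Matrix (Fin n) (Fin n) ℂ) (hM : M.IsHermitian) (hM' : M'.IsHermitian) :
    ∑ i : Fin n, (sVal M i - sVal M' i) ^ 2 ≤ frobSq (M - M') := by
  have hexp : ∑ i : Fin n, (sVal M i - sVal M' i) ^ 2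
      = ∑ i, sVal M i ^ 2 + ∑ i, sVal M' i ^ 2 - 2 * ∑ i, sVal M i * sVal M' i := by
    rw [← Finset.sum_add_distrib, Finset.mul_sum, ← Finset.sum_sub_distrib]
    exact Finset.sum_congr rfl fun i _ => by ring
  rw [hexp, sum_sVal_sq, sum_sVal_sq, frob_expand hM hM']
  have := trace_le hM hM'
  linarith

lemma sVal_conjTranspose_mul_self (A : Matrix (Fin n) (Fin n) ℂ) (i : Fin n) :
    sVal (Aᴴ * A) i = sVal A i ^ 2 := by
  have h1 : sVal A i ^ 2
      = sortD (Matrix.isHermitian_conjTranspose_mul_self A).eigenvalues i :=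
    Real.sq_sqrt ((Matrix.posSemidef_conjTranspose_mul_self A).eigenvalues_nonneg _)
  rw [sVal_eq (Matrix.isHermitian_conjTranspose_mul_self A), h1]
  congr 1
  funext j
  exact abs_of_nonneg ((Matrix.posSemidef_conjTranspose_mul_self A).eigenvalues_nonneg j)

end HW

/-- The Hoffman–Wielandt theorem: for self-adjoint `M, M'`,
`Σᵢ (σᵢ(M) − σᵢ(M'))² ≤ ‖M − M'‖_F²`; and as a corollary, for arbitrary `A, B`,
`Σᵢ (σᵢ(A)² − σᵢ(B)²)² ≤ ‖A*A − B*B‖_F²`. -/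
theorem hoffman_wielandt :
    (∀ (n : ℕ) (M M' : Matrix (Fin n) (Fin n) ℂ), M.IsHermitian → M'.IsHermitian →
      ∑ i : Fin n, (sVal M i - sVal M' i) ^ 2 ≤ frobSq (M - M')) ∧
    (∀ (n : ℕ) (A B : Matrix (Fin n) (Fin n) ℂ),
      ∑ i : Fin n, (sVal A i ^ 2 - sVal B i ^ 2) ^ 2 ≤ frobSq (Aᴴ * A - Bᴴ * B)) := by
  constructor
  · exact fun n M M' hM hM' => HW.part1 M M' hM hM'
  · intro n A B
    have h := HW.part1 (Aᴴ * A) (Bᴴ * B) (Matrix.isHermitian_conjTranspose_mul_self A)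
      (Matrix.isHermitian_conjTranspose_mul_self B)
    simpa [HW.sVal_conjTranspose_mul_self] using h
end
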